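/- arXiv:2008.04111 — 8 statements merged into one kernel-verified Lean document; each statement's English description precedes it below -/
import Mathlib

section
/- Fix positive real numbers μ and ν. Let I = (a,b) be an open interval of length greater than 2μ/ν, and let f be a C¹ function on I such that at each point x ∈ I, either |f(x)| > μ or |f'(x)| > ν. Then for each root x₀ of f in I with x₀ - a > μ/ν and b - x₀ > μ/ν, there exists an interval (a', b') with x₀ ∈ (a', b') ⊆ (x₀ - μ/ν, x₀ + μ/ν), f(a')·f(b') < 0, and |f(a')| = |f(b')| = μ. Moreover, the intervals associated to distinct such roots are pairwise disjoint. -/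
open Set

lemma sep_derivSign (μ ν a b : ℝ) (hν : 0 < ν)
    (f : ℝ → ℝ) (hf : ContDiffOn ℝ 1 f (Set.Ioo a b))
    (halt : ∀ x ∈ Set.Ioo a b, μ < |f x| ∨ ν < |deriv f x|)
    {c d : ℝ} (hcd : c ≤ d) (hsub : Icc c d ⊆ Ioo a b)
    (hμle : ∀ x ∈ Icc c d, |f x| ≤ μ) :
    (∀ x ∈ Icc c d, ν < deriv f x) ∨ (∀ x ∈ Icc c d, deriv f x < -ν) := by
  have hd : ∀ x ∈ Icc c d, ν < |deriv f x| := fun x hx =>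
    (halt x (hsub hx)).resolve_left (not_lt.2 (hμle x hx))
  have hcont : ContinuousOn (deriv f) (Icc c d) :=
    (hf.continuousOn_deriv_of_isOpen isOpen_Ioo le_rfl).mono hsub
  have hcmem : c ∈ Icc c d := ⟨le_rfl, hcd⟩
  have hne : ∀ x ∈ Icc c d, ν < deriv f x ∨ deriv f x < -ν := by
    intro x hx
    rcases lt_abs.mp (hd x hx) with h | h
    · exact Or.inl h
    · exact Or.inr (by linarith)
  rcases hne c hcmem with h0 | h0
  · left
    intro x hx
    rcases hne x hx with h | h
    · exact h
    · exfalso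
      have hsub2 : Icc c x ⊆ Icc c d := Icc_subset_Icc le_rfl hx.2
      have : (0 : ℝ) ∈ Icc (deriv f x) (deriv f c) := ⟨by linarith, by linarith⟩
      obtain ⟨w, hw, hw0⟩ := intermediate_value_Icc' hx.1 (hcont.mono hsub2) this
      have := hd w (hsub2 hw)
      rw [hw0] at this
      simp at this
      linarith
  · right
    intro x hx
    rcases hne x hx with h | h
    · exfalso
      have hsub2 : Icc c x ⊆ Icc c d := Icc_subset_Icc le_rfl hx.2
      have : (0 : ℝ) ∈ Icc (deriv f c) (deriv f x) := ⟨by linarith, by linarith⟩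
      obtain ⟨w, hw, hw0⟩ := intermediate_value_Icc hx.1 (hcont.mono hsub2) this
      have := hd w (hsub2 hw)
      rw [hw0] at this
      simp at this
      linarith
    · exact h

lemma sep_grow (μ ν a b : ℝ) (hν : 0 < ν)
    (f : ℝ → ℝ) (hf : ContDiffOn ℝ 1 f (Set.Ioo a b))
    (halt : ∀ x ∈ Set.Ioo a b, μ < |f x| ∨ ν < |deriv f x|)
    {c d : ℝ} (hcd : c < d) (hsub : Icc c d ⊆ Ioo a b)
    (hμle : ∀ x ∈ Icc c d, |f x| ≤ μ) :
    ν * (d - c) < |f d - f c| := by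
  have hcontf : ContinuousOn f (Icc c d) := hf.continuousOn.mono hsub
  have hder : ∀ x ∈ Ioo c d, HasDerivAt f (deriv f x) x := by
    intro x hx
    have hx' : x ∈ Ioo a b := hsub (Ioo_subset_Icc_self hx)
    exact ((hf.differentiableOn one_ne_zero).differentiableAt
      (isOpen_Ioo.mem_nhds hx')).hasDerivAt
  obtain ⟨w, hw, hws⟩ := exists_hasDerivAt_eq_slope f (deriv f) hcd hcontf hder
  have hdc : (0:ℝ) < d - c := by linarith
  rcases sep_derivSign μ ν a b hν f hf halt hcd.le hsub hμle with h | h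
  · have h1 := h w (Ioo_subset_Icc_self hw)
    rw [hws] at h1
    have h2 : ν * (d - c) < f d - f c := (lt_div_iff₀ hdc).mp h1
    exact h2.trans_le (le_abs_self _)
  · have h1 := h w (Ioo_subset_Icc_self hw)
    rw [hws] at h1
    have h2 : f d - f c < -ν * (d - c) := (div_lt_iff₀ hdc).mp h1
    have : ν * (d - c) < -(f d - f c) := by nlinarith
    exact this.trans_le (neg_le_abs _)

lemma sep_exists (μ ν a b : ℝ) (hμ : 0 < μ) (hν : 0 < ν)
    (f : ℝ → ℝ) (hf : ContDiffOn ℝ 1 f (Set.Ioo a b))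
    (halt : ∀ x ∈ Set.Ioo a b, μ < |f x| ∨ ν < |deriv f x|)
    {x₀ : ℝ} (hx₀ : x₀ ∈ Set.Ioo a b) (h0 : f x₀ = 0)
    (hA : μ / ν < x₀ - a) (hB : μ / ν < b - x₀) :
    ∃ p : ℝ × ℝ,
      x₀ ∈ Ioo p.1 p.2 ∧ Ioo p.1 p.2 ⊆ Ioo (x₀ - μ/ν) (x₀ + μ/ν) ∧
      f p.1 * f p.2 < 0 ∧ |f p.1| = μ ∧ |f p.2| = μ ∧
      (∀ x ∈ Icc p.1 p.2, |f x| ≤ μ) ∧ (∀ x ∈ Ioo p.1 p.2, |f x| < μ) ∧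
      Icc p.1 p.2 ⊆ Ioo a b := by
  set r := μ / ν with hrdef
  have hr : 0 < r := div_pos hμ hν
  have hνr : ν * r = μ := by rw [hrdef]; field_simp
  have habs0 : |f x₀| = 0 := by rw [h0]; simp
  -- big closed interval around x₀
  have hIsub : Icc (x₀ - r) (x₀ + r) ⊆ Ioo a b := by
    intro x hx
    exact ⟨by cases hx₀ with | intro h1 h2 => linarith [hx.1],
           by cases hx₀ with | intro h1 h2 => linarith [hx.2]⟩
  have hRsub : Icc x₀ (x₀ + r) ⊆ Ioo a b :=
    (Icc_subset_Icc (by linarith) le_rfl).trans hIsub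
  have hLsub : Icc (x₀ - r) x₀ ⊆ Ioo a b :=
    (Icc_subset_Icc le_rfl (by linarith)).trans hIsub
  -- right endpoint
  set S : Set ℝ := Icc x₀ (x₀ + r) ∩ {x | μ ≤ |f x|} with hSdef
  have hSclosed : IsClosed S := by
    have : ContinuousOn (fun x => |f x|) (Icc x₀ (x₀ + r)) :=
      (hf.continuousOn.mono hRsub).abs
    exact this.preimage_isClosed_of_isClosed isClosed_Icc isClosed_Ici
  have hSne : S.Nonempty := by
    by_contra hc
    rw [Set.not_nonempty_iff_eq_empty] at hc
    have hlt : ∀ x ∈ Icc x₀ (x₀ + r), |f x| ≤ μ := by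
      intro x hx
      by_contra hgt
      have : x ∈ S := ⟨hx, le_of_lt (not_le.mp hgt)⟩
      rw [hc] at this; exact this
    have := sep_grow μ ν a b hν f hf halt (by linarith : x₀ < x₀ + r) hRsub hlt
    have e1 : ν * ((x₀ + r) - x₀) = μ := by rw [show (x₀ + r) - x₀ = r by ring, hνr]
    have e2 : f (x₀ + r) - f x₀ = f (x₀ + r) := by rw [h0, sub_zero]
    rw [e1, e2] at this
    have hx1 : x₀ + r ∈ Icc x₀ (x₀ + r) := ⟨by linarith, le_rfl⟩
    have h2 := hlt _ hx1
    linarith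
  have hSbdd : BddBelow S := ⟨x₀, fun y hy => hy.1.1⟩
  set d := sInf S with hddef
  have hdS : d ∈ S := hSclosed.csInf_mem hSne hSbdd
  have hd2 : d ≤ x₀ + r := hdS.1.2
  have hd1 : x₀ < d := by
    rcases lt_or_eq_of_le (le_csInf hSne fun y hy => hy.1.1) with h | h
    · exact h
    · exfalso
      have h2 : μ ≤ |f d| := hdS.2
      rw [hddef, ← h] at h2
      rw [habs0] at h2; linarith
  have hdless : ∀ x, x₀ ≤ x → x < d → |f x| < μ := by
    intro x h1 h2
    have hnot := notMem_of_lt_csInf h2 hSbdd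
    have : x ∈ Icc x₀ (x₀ + r) := ⟨h1, by linarith⟩
    by_contra hc
    exact hnot ⟨this, le_of_not_gt hc⟩
  have hfd : |f d| = μ := by
    have hcont : ContinuousOn (fun x => |f x|) (Icc x₀ d) :=
      ((hf.continuousOn.mono hRsub).abs).mono (Icc_subset_Icc le_rfl hd2)
    have hmem : μ ∈ Icc |f x₀| |f d| := ⟨by rw [habs0]; linarith, hdS.2⟩
    obtain ⟨w, hw, hww⟩ := intermediate_value_Icc hd1.le hcont hmem
    have hwS : w ∈ S := ⟨⟨hw.1, by linarith [hw.2]⟩, le_of_eq hww.symm⟩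
    have : d ≤ w := csInf_le hSbdd hwS
    have hwd : w = d := le_antisymm hw.2 this
    rw [← hwd]; exact hww
  -- left endpoint
  set T : Set ℝ := Icc (x₀ - r) x₀ ∩ {x | μ ≤ |f x|} with hTdef
  have hTclosed : IsClosed T := by
    have : ContinuousOn (fun x => |f x|) (Icc (x₀ - r) x₀) :=
      (hf.continuousOn.mono hLsub).abs
    exact this.preimage_isClosed_of_isClosed isClosed_Icc isClosed_Ici
  have hTne : T.Nonempty := by
    by_contra hc
    rw [Set.not_nonempty_iff_eq_empty] at hc
    have hlt : ∀ x ∈ Icc (x₀ - r) x₀, |f x| ≤ μ := by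
      intro x hx
      by_contra hgt
      have : x ∈ T := ⟨hx, le_of_lt (not_le.mp hgt)⟩
      rw [hc] at this; exact this
    have := sep_grow μ ν a b hν f hf halt (by linarith : x₀ - r < x₀) hLsub hlt
    have e1 : ν * (x₀ - (x₀ - r)) = μ := by rw [show x₀ - (x₀ - r) = r by ring, hνr]
    have e2 : |f x₀ - f (x₀ - r)| = |f (x₀ - r)| := by rw [h0, zero_sub, abs_neg]
    rw [e1, e2] at this
    have hx1 : x₀ - r ∈ Icc (x₀ - r) x₀ := ⟨le_rfl, by linarith⟩
    have h2 := hlt _ hx1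
    linarith
  have hTbdd : BddAbove T := ⟨x₀, fun y hy => hy.1.2⟩
  set c := sSup T with hcdef
  have hcT : c ∈ T := hTclosed.csSup_mem hTne hTbdd
  have hc2 : x₀ - r ≤ c := hcT.1.1
  have hc1 : c < x₀ := by
    rcases lt_or_eq_of_le (csSup_le hTne fun y hy => hy.1.2) with h | h
    · exact h
    · exfalso
      have h2 : μ ≤ |f c| := hcT.2
      rw [hcdef, h] at h2
      rw [habs0] at h2; linarith
  have hcless : ∀ x, x ≤ x₀ → c < x → |f x| < μ := by
    intro x h1 h2
    have hnot := notMem_of_csSup_lt h2 hTbdd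
    have : x ∈ Icc (x₀ - r) x₀ := ⟨by linarith, h1⟩
    by_contra hc'
    exact hnot ⟨this, le_of_not_gt hc'⟩
  have hfc : |f c| = μ := by
    have hcont : ContinuousOn (fun x => |f x|) (Icc c x₀) :=
      ((hf.continuousOn.mono hLsub).abs).mono (Icc_subset_Icc hc2 le_rfl)
    have hmem : μ ∈ Icc |f x₀| |f c| := ⟨by rw [habs0]; linarith, hcT.2⟩
    obtain ⟨w, hw, hww⟩ := intermediate_value_Icc' hc1.le hcont hmem
    have hwT : w ∈ T := ⟨⟨by linarith [hw.1], hw.2⟩, le_of_eq hww.symm⟩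
    have : w ≤ c := le_csSup hTbdd hwT
    have hwc : w = c := le_antisymm this hw.1
    rw [← hwc]; exact hww
  -- assemble
  have hcdsub : Icc c d ⊆ Ioo a b :=
    (Icc_subset_Icc hc2 hd2).trans hIsub
  have hcd : c < d := hc1.trans hd1
  have hle : ∀ x ∈ Icc c d, |f x| ≤ μ := by
    intro x hx
    rcases le_total x x₀ with h | h
    · rcases eq_or_lt_of_le hx.1 with he | hlt'
      · rw [he] at hfc; exact hfc.le
      · exact le_of_lt (hcless x h hlt')
    · rcases eq_or_lt_of_le hx.2 with he | hlt'
      · rw [← he] at hfd; exact hfd.le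
      · exact le_of_lt (hdless x h hlt')
  have hlt : ∀ x ∈ Ioo c d, |f x| < μ := by
    intro x hx
    rcases le_total x x₀ with h | h
    · exact hcless x h hx.1
    · exact hdless x h hx.2
  have hcontf : ContinuousOn f (Icc c d) := hf.continuousOn.mono hcdsub
  have hx₀mem : x₀ ∈ Icc c d := ⟨hc1.le, hd1.le⟩
  have hprod : f c * f d < 0 := by
    rcases sep_derivSign μ ν a b hν f hf halt hcd.le hcdsub hle with h | h
    · have hsm : StrictMonoOn f (Icc c d) := by
        apply strictMonoOn_of_deriv_pos (convex_Icc c d) hcontf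
        intro x hx
        rw [interior_Icc] at hx
        exact lt_trans hν (h x (Ioo_subset_Icc_self hx))
      have h1 : f c < f x₀ := hsm ⟨le_rfl, hcd.le⟩ hx₀mem hc1
      have h2 : f x₀ < f d := hsm hx₀mem ⟨hcd.le, le_rfl⟩ hd1
      rw [h0] at h1 h2
      exact mul_neg_of_neg_of_pos h1 h2
    · have hsm : StrictAntiOn f (Icc c d) := by
        apply strictAntiOn_of_deriv_neg (convex_Icc c d) hcontf
        intro x hx
        rw [interior_Icc] at hx
        exact lt_trans (h x (Ioo_subset_Icc_self hx)) (by linarith)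
      have h1 : f x₀ < f c := hsm ⟨le_rfl, hcd.le⟩ hx₀mem hc1
      have h2 : f d < f x₀ := hsm hx₀mem ⟨hcd.le, le_rfl⟩ hd1
      rw [h0] at h1 h2
      exact mul_neg_of_pos_of_neg h1 h2
  exact ⟨(c, d), ⟨hc1, hd1⟩, Ioo_subset_Ioo (by linarith) (by linarith),
    hprod, hfc, hfd, hle, hlt, hcdsub⟩

lemma sep_disj (μ ν a b : ℝ) (hμ : 0 < μ) (hν : 0 < ν)
    (f : ℝ → ℝ) (hf : ContDiffOn ℝ 1 f (Set.Ioo a b))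
    (halt : ∀ x ∈ Set.Ioo a b, μ < |f x| ∨ ν < |deriv f x|)
    {x₀ y₀ : ℝ} {p q : ℝ × ℝ}
    (hpx : x₀ ∈ Ioo p.1 p.2) (hple : ∀ x ∈ Icc p.1 p.2, |f x| ≤ μ)
    (hpsub : Icc p.1 p.2 ⊆ Ioo a b)
    (hqy : y₀ ∈ Ioo q.1 q.2) (hqle : ∀ x ∈ Icc q.1 q.2, |f x| ≤ μ)
    (hqsub : Icc q.1 q.2 ⊆ Ioo a b)
    (hfx : f x₀ = 0) (hfy : f y₀ = 0) (hne : x₀ ≠ y₀) :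
    Disjoint (Ioo p.1 p.2) (Ioo q.1 q.2) := by
  by_contra hc
  obtain ⟨z, hz1, hz2⟩ := Set.not_disjoint_iff.mp hc
  set c := min p.1 q.1 with hcdef
  set d := max p.2 q.2 with hddef
  have cover : Icc c d ⊆ Icc p.1 p.2 ∪ Icc q.1 q.2 := by
    intro x hx
    rcases le_total x z with h | h
    · rcases le_total p.1 q.1 with h' | h'
      · exact Or.inl ⟨((min_eq_left h').symm.le).trans hx.1, le_trans h hz1.2.le⟩
      · exact Or.inr ⟨((min_eq_right h').symm.le).trans hx.1, le_trans h hz2.2.le⟩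
    · rcases le_total p.2 q.2 with h' | h'
      · exact Or.inr ⟨le_trans hz2.1.le h, hx.2.trans (max_eq_right h').le⟩
      · exact Or.inl ⟨le_trans hz1.1.le h, hx.2.trans (max_eq_left h').le⟩
  have hsub : Icc c d ⊆ Ioo a b := fun x hx => by
    rcases cover hx with h | h
    · exact hpsub h
    · exact hqsub h
  have hle : ∀ x ∈ Icc c d, |f x| ≤ μ := fun x hx => by
    rcases cover hx with h | h
    · exact hple x h
    · exact hqle x h
  have hcd : c ≤ d :=
    le_trans (le_trans (min_le_left _ _) hz1.1.le) (le_trans hz1.2.le (le_max_left _ _))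
  have hxm : x₀ ∈ Icc c d :=
    ⟨le_trans (min_le_left _ _) hpx.1.le, le_trans hpx.2.le (le_max_left _ _)⟩
  have hym : y₀ ∈ Icc c d :=
    ⟨le_trans (min_le_right _ _) hqy.1.le, le_trans hqy.2.le (le_max_right _ _)⟩
  have hcontf : ContinuousOn f (Icc c d) := hf.continuousOn.mono hsub
  have hinj : Set.InjOn f (Icc c d) := by
    rcases sep_derivSign μ ν a b hν f hf halt hcd hsub hle with h | h
    · refine (strictMonoOn_of_deriv_pos (convex_Icc c d) hcontf ?_).injOn
      intro x hx
      rw [interior_Icc] at hx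
      exact lt_trans hν (h x (Ioo_subset_Icc_self hx))
    · refine (strictAntiOn_of_deriv_neg (convex_Icc c d) hcontf ?_).injOn
      intro x hx
      rw [interior_Icc] at hx
      exact lt_trans (h x (Ioo_subset_Icc_self hx)) (by linarith)
  exact hne (hinj hxm hym (by rw [hfx, hfy]))


/-- Separation lemma: for a C¹ function `f` on `(a,b)` such that at each point either
`|f| > μ` or `|f'| > ν`, every root `x₀` that is `μ/ν`-away from the endpoints has an
associated interval `(a', b')` with `x₀ ∈ (a',b') ⊆ (x₀ - μ/ν, x₀ + μ/ν)`,
`f(a')f(b') < 0`, `|f(a')| = |f(b')| = μ`, and the intervals of distinct roots are disjoint. -/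
theorem stmt1 (μ ν a b : ℝ) (hμ : 0 < μ) (hν : 0 < ν) (hlen : b - a > 2 * μ / ν)
    (f : ℝ → ℝ) (hf : ContDiffOn ℝ 1 f (Set.Ioo a b))
    (halt : ∀ x ∈ Set.Ioo a b, μ < |f x| ∨ ν < |deriv f x|) :
    ∃ I : ℝ → ℝ × ℝ,
      (∀ x₀ ∈ Set.Ioo a b, f x₀ = 0 → μ / ν < x₀ - a → μ / ν < b - x₀ →
        x₀ ∈ Set.Ioo (I x₀).1 (I x₀).2 ∧
        Set.Ioo (I x₀).1 (I x₀).2 ⊆ Set.Ioo (x₀ - μ / ν) (x₀ + μ / ν) ∧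
        f (I x₀).1 * f (I x₀).2 < 0 ∧ |f (I x₀).1| = μ ∧ |f (I x₀).2| = μ) ∧
      (∀ x₀ ∈ Set.Ioo a b, ∀ y₀ ∈ Set.Ioo a b,
        f x₀ = 0 → μ / ν < x₀ - a → μ / ν < b - x₀ →
        f y₀ = 0 → μ / ν < y₀ - a → μ / ν < b - y₀ → x₀ ≠ y₀ →
        Disjoint (Set.Ioo (I x₀).1 (I x₀).2) (Set.Ioo (I y₀).1 (I y₀).2)) := by
  classical
  set P : ℝ → Prop := fun x₀ =>
    x₀ ∈ Set.Ioo a b ∧ f x₀ = 0 ∧ μ / ν < x₀ - a ∧ μ / ν < b - x₀ with hP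
  have key : ∀ x₀, P x₀ → ∃ p : ℝ × ℝ,
      x₀ ∈ Ioo p.1 p.2 ∧ Ioo p.1 p.2 ⊆ Ioo (x₀ - μ/ν) (x₀ + μ/ν) ∧
      f p.1 * f p.2 < 0 ∧ |f p.1| = μ ∧ |f p.2| = μ ∧
      (∀ x ∈ Icc p.1 p.2, |f x| ≤ μ) ∧ (∀ x ∈ Ioo p.1 p.2, |f x| < μ) ∧
      Icc p.1 p.2 ⊆ Ioo a b := fun x₀ h =>
    sep_exists μ ν a b hμ hν f hf halt h.1 h.2.1 h.2.2.1 h.2.2.2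
  refine ⟨fun x₀ => if h : P x₀ then (key x₀ h).choose else (0, 0), ?_, ?_⟩
  · intro x₀ hx₀ h0 hA hB
    have hx : P x₀ := ⟨hx₀, h0, hA, hB⟩
    simp only [dif_pos hx]
    obtain ⟨h1, h2, h3, h4, h5, _, _, _⟩ := (key x₀ hx).choose_spec
    exact ⟨h1, h2, h3, h4, h5⟩
  · intro x₀ hx₀ y₀ hy₀ h0x hAx hBx h0y hAy hBy hne
    have hx : P x₀ := ⟨hx₀, h0x, hAx, hBx⟩
    have hy : P y₀ := ⟨hy₀, h0y, hAy, hBy⟩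
    simp only [dif_pos hx, dif_pos hy]
    obtain ⟨h1, _, _, _, _, h6, _, h8⟩ := (key x₀ hx).choose_spec
    obtain ⟨g1, _, _, _, _, g6, _, g8⟩ := (key y₀ hy).choose_spec
    exact sep_disj μ ν a b hμ hν f hf halt h1 h6 h8 g1 g6 g8 h0x h0y hne
end

section
/- Fix positive real numbers μ and ν. Let I = (a,b) be an interval of length at least 2μ/ν, and let f be a C¹ function on I such that at each point x ∈ I, either |f(x)| > μ or |f'(x)| > ν. Let g be a function on I with |g(x)| < μ for all x ∈ I. Then for each root x₀ of f in I with x₀ - a > μ/ν and b - x₀ > μ/ν, the function f + g has a root in the interval (x₀ - μ/ν, x₀ + μ/ν); moreover, distinct such roots of f yield distinct roots of f + g. -/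
open Set

lemma escape (μ ν u : ℝ) (hμ : 0 < μ) (hν : 0 < ν) (f f' : ℝ → ℝ)
    (hder : ∀ x ∈ Icc u (u + μ/ν), HasDerivAt f (f' x) x)
    (hcont : ContinuousOn f' (Icc u (u + μ/ν)))
    (halt : ∀ x ∈ Icc u (u + μ/ν), μ < |f x| ∨ ν < |f' x|)
    (hfu : f u = 0) (hd0 : ν < f' u) :
    ∃ c, u < c ∧ c ≤ u + μ/ν ∧ μ ≤ f c ∧ (∀ x, u ≤ x → x < c → |f x| < μ) ∧
      (∀ y, u < y → y ≤ c → 0 < f y) := by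
  have hs : 0 < μ/ν := div_pos hμ hν
  have hcf : ContinuousOn f (Icc u (u + μ/ν)) :=
    fun x hx => (hder x hx).continuousAt.continuousWithinAt
  -- on any initial segment where |f| < μ, we have f' > ν
  have claim : ∀ c ∈ Icc u (u + μ/ν), (∀ x, u ≤ x → x < c → |f x| < μ) →
      ∀ x, u ≤ x → x < c → ν < f' x := by
    intro c hc hsmall x hux hxc
    have hxI : x ∈ Icc u (u + μ/ν) := ⟨hux, le_trans hxc.le hc.2⟩
    have h1 : ν < |f' x| := by
      rcases halt x hxI with h | h
      · exact absurd h (not_lt.mpr (hsmall x hux hxc).le)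
      · exact h
    rcases lt_or_ge (f' x) 0 with hneg | hpos
    · exfalso
      have hxIcc : Icc u x ⊆ Icc u (u + μ/ν) := Icc_subset_Icc le_rfl hxI.2
      have h0 : (0:ℝ) ∈ f' '' Icc u x := by
        apply intermediate_value_Icc' hux (hcont.mono hxIcc)
        exact ⟨hneg.le, by linarith⟩
      obtain ⟨z, hz, hz0⟩ := h0
      have hzI : z ∈ Icc u (u + μ/ν) := hxIcc hz
      have hz2 : |f z| < μ := hsmall z hz.1 (lt_of_le_of_lt hz.2 hxc)
      rcases halt z hzI with h | h
      · exact absurd hz2 (not_lt.mpr h.le)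
      · rw [hz0] at h; simp at h; linarith
    · rwa [abs_of_nonneg hpos] at h1
  -- growth estimate
  have grow : ∀ c ∈ Icc u (u + μ/ν), (∀ x, u ≤ x → x < c → |f x| < μ) →
      ∀ y, u < y → y ≤ c → ν * (y - u) < f y := by
    intro c hc hsmall y huy hyc
    have hyI : y ≤ u + μ/ν := hyc.trans hc.2
    obtain ⟨z, hz, hslope⟩ := exists_hasDerivAt_eq_slope f f' huy
      (hcf.mono (Icc_subset_Icc le_rfl hyI))
      (fun x hx => hder x ⟨hx.1.le, hx.2.le.trans hyI⟩)
    have hz' : ν < f' z := claim c hc hsmall z hz.1.le (lt_of_lt_of_le hz.2 hyc)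
    rw [hslope, hfu] at hz'
    have h2 : 0 < y - u := sub_pos.mpr huy
    have := (lt_div_iff₀ h2).mp hz'
    linarith
  set T := {x ∈ Icc u (u + μ/ν) | μ ≤ |f x|} with hT
  have hTne : T.Nonempty := by
    by_contra hE
    rw [Set.not_nonempty_iff_eq_empty] at hE
    have hsmall : ∀ x, u ≤ x → x < u + μ/ν → |f x| < μ := by
      intro x hux hxc
      by_contra h; push_neg at h
      have : x ∈ T := ⟨⟨hux, hxc.le⟩, h⟩
      rw [hE] at this; exact this
    have hend : |f (u + μ/ν)| < μ := by
      by_contra h; push_neg at h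
      have : (u + μ/ν) ∈ T := ⟨⟨by linarith, le_rfl⟩, h⟩
      rw [hE] at this; exact this
    have := grow (u + μ/ν) ⟨by linarith, le_rfl⟩ hsmall (u + μ/ν) (by linarith) le_rfl
    have hμν : ν * (u + μ/ν - u) = μ := by field_simp; ring
    rw [hμν] at this
    have := le_abs_self (f (u + μ/ν))
    linarith
  have hTclosed : IsClosed T := by
    have : T = Icc u (u + μ/ν) ∩ (fun x => |f x|) ⁻¹' (Ici μ) := by
      ext x; simp [hT, Set.mem_sep_iff, and_comm]
    rw [this]
    exact ContinuousOn.preimage_isClosed_of_isClosed hcf.abs isClosed_Icc isClosed_Ici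
  have hbdd : BddBelow T := ⟨u, fun x hx => hx.1.1⟩
  set c := sInf T with hc
  have hcT : c ∈ T := hTclosed.csInf_mem hTne hbdd
  have hcI : c ∈ Icc u (u + μ/ν) := hcT.1
  have hsmall : ∀ x, u ≤ x → x < c → |f x| < μ := by
    intro x hux hxc
    by_contra h; push_neg at h
    exact absurd (csInf_le hbdd ⟨⟨hux, hxc.le.trans hcI.2⟩, h⟩) (not_le.mpr hxc)
  have huc : u < c := by
    rcases eq_or_lt_of_le hcI.1 with h | h
    · exfalso; have h2 := hcT.2; rw [← h, hfu] at h2; simp at h2; linarith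
    · exact h
  have hpos : ∀ y, u < y → y ≤ c → 0 < f y := by
    intro y hy hyc
    have := grow c hcI hsmall y hy hyc
    nlinarith [sub_pos.mpr hy]
  have hfc : μ ≤ f c := by
    have h1 := hcT.2
    rwa [abs_of_pos (hpos c huc le_rfl)] at h1
  exact ⟨c, huc, hcI.2, hfc, hsmall, hpos⟩

open Set

lemma both (μ ν a b x₀ : ℝ) (hμ : 0 < μ) (hν : 0 < ν) (f g f' : ℝ → ℝ)
    (hder : ∀ x ∈ Ioo a b, HasDerivAt f (f' x) x)
    (hcont : ContinuousOn f' (Ioo a b))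
    (hgc : ContinuousOn g (Ioo a b))
    (halt : ∀ x ∈ Ioo a b, μ < |f x| ∨ ν < |f' x|)
    (hgs : ∀ x ∈ Ioo a b, |g x| < μ)
    (hx : x₀ ∈ Ioo a b) (hroot : f x₀ = 0) (hla : μ/ν < x₀ - a) (hlb : μ/ν < b - x₀)
    (hd0 : ν < f' x₀) :
    ∃ r d c, d < x₀ ∧ x₀ < c ∧ x₀ - μ/ν ≤ d ∧ c ≤ x₀ + μ/ν ∧ d < r ∧ r < c ∧
      f r + g r = 0 ∧ μ ≤ |f c| ∧ (∀ x, d < x → x < c → |f x| < μ) ∧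
      (∀ y, x₀ < y → y ≤ c → f y ≠ 0) := by
  have hs : 0 < μ/ν := div_pos hμ hν
  have hsubR : Icc x₀ (x₀ + μ/ν) ⊆ Ioo a b := fun x hxx =>
    ⟨by have := hxx.1; linarith, by have := hxx.2; linarith⟩
  have hsubL : Icc (x₀ - μ/ν) x₀ ⊆ Ioo a b := fun x hxx =>
    ⟨by have := hxx.1; linarith, by have := hxx.2; linarith⟩
  -- right escape
  obtain ⟨c, hc1, hc2, hc3, hc4, hc5⟩ := escape μ ν x₀ hμ hν f f'
    (fun x hxx => hder x (hsubR hxx)) (hcont.mono hsubR)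
    (fun x hxx => halt x (hsubR hxx)) hroot hd0
  -- left escape via reflection
  have hrefl : ∀ x ∈ Icc x₀ (x₀ + μ/ν), 2*x₀ - x ∈ Icc (x₀ - μ/ν) x₀ := by
    intro x hxx; exact ⟨by have := hxx.2; linarith, by have := hxx.1; linarith⟩
  obtain ⟨c', hc'1, hc'2, hc'3, hc'4, hc'5⟩ := escape μ ν x₀ hμ hν
    (fun x => -f (2*x₀ - x)) (fun x => f' (2*x₀ - x))
    (by
      intro x hxx
      have h := (hder (2*x₀ - x) (hsubL (hrefl x hxx))).comp x
        ((hasDerivAt_const x (2*x₀)).sub (hasDerivAt_id x))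
      have h2 := h.neg
      exact h2.congr_deriv (by ring))
    (by
      apply ContinuousOn.comp (hcont.mono hsubL) (Continuous.continuousOn (by continuity))
      intro x hxx; exact hrefl x hxx)
    (by
      intro x hxx
      have := halt (2*x₀ - x) (hsubL (hrefl x hxx))
      rcases this with h | h
      · left; rwa [abs_neg]
      · right; exact h)
    (by show -f (2*x₀ - x₀) = 0; rw [show 2*x₀ - x₀ = x₀ by ring, hroot]; ring)
    (by show ν < f' (2*x₀ - x₀); rw [show 2*x₀ - x₀ = x₀ by ring]; exact hd0)
  set d := 2*x₀ - c' with hd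
  have hdx : d < x₀ := by simp [hd]; linarith
  have hdl : x₀ - μ/ν ≤ d := by simp [hd]; linarith
  have hfd : f d ≤ -μ := by
    have : μ ≤ -f (2*x₀ - c') := hc'3
    simp [hd]; linarith
  have hdIoo : d ∈ Ioo a b := hsubL ⟨hdl, hdx.le⟩
  have hcIoo : c ∈ Ioo a b := hsubR ⟨hc1.le, hc2⟩
  -- IVT for f + g on [d, c]
  have hdc : d < c := hdx.trans hc1
  have hsubdc : Icc d c ⊆ Ioo a b := fun x hxx =>
    ⟨hdIoo.1.trans_le hxx.1, lt_of_le_of_lt hxx.2 hcIoo.2⟩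
  have hfcont : ContinuousOn (fun x => f x + g x) (Icc d c) := by
    apply ContinuousOn.add
    · exact fun x hxx => (hder x (hsubdc hxx)).continuousAt.continuousWithinAt
    · exact hgc.mono hsubdc
  have hgd : g d < μ := (abs_lt.mp (hgs d hdIoo)).2
  have hgc2 : -μ < g c := (abs_lt.mp (hgs c hcIoo)).1
  have hvd : f d + g d < 0 := by linarith
  have hvc : 0 < f c + g c := by linarith
  obtain ⟨r, hr, hr0⟩ := intermediate_value_Ioo hdc.le hfcont ⟨hvd, hvc⟩
  refine ⟨r, d, c, hdx, hc1, hdl, hc2, hr.1, hr.2, hr0,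
    le_trans hc3 (le_abs_self _), ?_, ?_⟩
  · intro x hdx2 hxc
    rcases le_or_gt x₀ x with h | h
    · exact hc4 x h hxc
    · have h1 : x₀ ≤ 2*x₀ - x := by linarith
      have h2 : 2*x₀ - x < c' := by
        have : d < x := hdx2
        rw [hd] at this; linarith
      have h3 := hc'4 (2*x₀ - x) h1 h2
      have h4 : 2*x₀ - (2*x₀ - x) = x := by ring
      rwa [h4, abs_neg] at h3
  · intro y hy hyc
    exact (hc5 y hy hyc).ne'

/-- Perturbation of roots: for a C¹ function `f` on `(a,b)` with `|f| > μ` or `|f'| > ν` at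
each point, and a perturbation `g` with `|g| < μ` on `(a,b)`, each root `x₀` of `f` away from
the endpoints yields a root of `f + g` in `(x₀ - μ/ν, x₀ + μ/ν)`, distinct roots yielding
distinct roots. -/
theorem stmt2 (μ ν a b : ℝ) (hμ : 0 < μ) (hν : 0 < ν) (hlen : 2 * μ / ν ≤ b - a)
    (f g : ℝ → ℝ) (hf : ContDiffOn ℝ 1 f (Set.Ioo a b))
    (hg : ContinuousOn g (Set.Ioo a b))
    (halt : ∀ x ∈ Set.Ioo a b, μ < |f x| ∨ ν < |deriv f x|)
    (hgsmall : ∀ x ∈ Set.Ioo a b, |g x| < μ) :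
    ∃ r : ℝ → ℝ,
      (∀ x₀ ∈ Set.Ioo a b, f x₀ = 0 → μ / ν < x₀ - a → μ / ν < b - x₀ →
        r x₀ ∈ Set.Ioo (x₀ - μ / ν) (x₀ + μ / ν) ∧ f (r x₀) + g (r x₀) = 0) ∧
      (∀ x₀ ∈ Set.Ioo a b, ∀ y₀ ∈ Set.Ioo a b,
        f x₀ = 0 → μ / ν < x₀ - a → μ / ν < b - x₀ →
        f y₀ = 0 → μ / ν < y₀ - a → μ / ν < b - y₀ → x₀ ≠ y₀ → r x₀ ≠ r y₀) := by
  classical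
  have hder : ∀ x ∈ Set.Ioo a b, HasDerivAt f (deriv f x) x := fun x hx =>
    ((hf.differentiableOn one_ne_zero).differentiableAt (isOpen_Ioo.mem_nhds hx)).hasDerivAt
  have hcont : ContinuousOn (deriv f) (Set.Ioo a b) :=
    hf.continuousOn_deriv_of_isOpen isOpen_Ioo le_rfl
  have key : ∀ x₀, x₀ ∈ Set.Ioo a b → f x₀ = 0 → μ/ν < x₀ - a → μ/ν < b - x₀ →
      ∃ r d c, d < x₀ ∧ x₀ < c ∧ x₀ - μ/ν ≤ d ∧ c ≤ x₀ + μ/ν ∧ d < r ∧ r < c ∧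
        f r + g r = 0 ∧ μ ≤ |f c| ∧ (∀ x, d < x → x < c → |f x| < μ) ∧
        (∀ y, x₀ < y → y ≤ c → f y ≠ 0) := by
    intro x₀ hx hroot hla hlb
    have hnu : ν < |deriv f x₀| := by
      rcases halt x₀ hx with h | h
      · rw [hroot] at h; simp at h; linarith
      · exact h
    rcases le_or_gt 0 (deriv f x₀) with hsgn | hsgn
    · rw [abs_of_nonneg hsgn] at hnu
      exact both μ ν a b x₀ hμ hν f g (deriv f) hder hcont hg halt hgsmall
        hx hroot hla hlb hnu
    · rw [abs_of_neg hsgn] at hnu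
      obtain ⟨r, d, c, p1, p2, p3, p4, p5, p6, p7, p8, p9, p10⟩ :=
        both μ ν a b x₀ hμ hν (fun x => -f x) (fun x => -g x) (fun x => -(deriv f x))
          (fun x hx2 => (hder x hx2).neg) hcont.neg hg.neg
          (fun x hx2 => by simpa [abs_neg] using halt x hx2)
          (fun x hx2 => by simpa [abs_neg] using hgsmall x hx2)
          hx (by simp [hroot]) hla hlb hnu
      refine ⟨r, d, c, p1, p2, p3, p4, p5, p6, by linarith, by simpa [abs_neg] using p8,
        fun x h1 h2 => by simpa [abs_neg] using p9 x h1 h2,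
        fun y h1 h2 h3 => p10 y h1 h2 (by simp [h3])⟩
  set P : ℝ → Prop := fun x₀ =>
    x₀ ∈ Set.Ioo a b ∧ f x₀ = 0 ∧ μ/ν < x₀ - a ∧ μ/ν < b - x₀ with hP
  refine ⟨fun x₀ => if h : P x₀ then
      (key x₀ h.1 h.2.1 h.2.2.1 h.2.2.2).choose else 0, ?_, ?_⟩
  · intro x₀ hx hroot hla hlb
    have hPx : P x₀ := ⟨hx, hroot, hla, hlb⟩
    simp only [dif_pos hPx]
    obtain ⟨d, c, p1, p2, p3, p4, p5, p6, p7, _, _, _⟩ :=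
      (key x₀ hPx.1 hPx.2.1 hPx.2.2.1 hPx.2.2.2).choose_spec
    exact ⟨⟨by linarith, by linarith⟩, p7⟩
  · have main : ∀ x₀ y₀, x₀ ∈ Set.Ioo a b → y₀ ∈ Set.Ioo a b →
        f x₀ = 0 → μ/ν < x₀ - a → μ/ν < b - x₀ →
        f y₀ = 0 → μ/ν < y₀ - a → μ/ν < b - y₀ → x₀ < y₀ →
        (if h : P x₀ then (key x₀ h.1 h.2.1 h.2.2.1 h.2.2.2).choose else 0) <
        (if h : P y₀ then (key y₀ h.1 h.2.1 h.2.2.1 h.2.2.2).choose else 0) := by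
      intro x₀ y₀ hx hy hrx hax hbx hry hay hby hlt
      have hPx : P x₀ := ⟨hx, hrx, hax, hbx⟩
      have hPy : P y₀ := ⟨hy, hry, hay, hby⟩
      simp only [dif_pos hPx, dif_pos hPy]
      obtain ⟨d₁, c₁, q1, q2, q3, q4, q5, q6, q7, q8, q9, q10⟩ :=
        (key x₀ hPx.1 hPx.2.1 hPx.2.2.1 hPx.2.2.2).choose_spec
      obtain ⟨d₂, c₂, p1, p2, p3, p4, p5, p6, p7, p8, p9, p10⟩ :=
        (key y₀ hPy.1 hPy.2.1 hPy.2.2.1 hPy.2.2.2).choose_spec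
      have hyc1 : c₁ < y₀ := by
        by_contra h; push_neg at h
        exact q10 y₀ hlt h hry
      have hc1d2 : c₁ ≤ d₂ := by
        by_contra h; push_neg at h
        have := p9 c₁ h (hyc1.trans p2)
        linarith [q8]
      linarith
    intro x₀ hx y₀ hy hrx hax hbx hry hay hby hne
    rcases hne.lt_or_gt with h | h
    · exact (main x₀ y₀ hx hy hrx hax hbx hry hay hby h).ne
    · exact (main y₀ x₀ hy hx hry hay hby hrx hax hbx h).ne'
end

section
/- Let m be a positive integer, E = {μ ∈ ℤ² : μ₁² + μ₂² = m} with N = #E ≥ 1, and let v ∈ ℝ² be a unit vector. Then Σ_{μ ∈ E} ⟨μ/√m, v⟩² = N/2. -/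
/-- Isotropy of the lattice point set: if `E = {μ ∈ ℤ² : μ₁² + μ₂² = m}` has `N ≥ 1`
elements and `v` is a unit vector in `ℝ²`, then `∑_{μ ∈ E} ⟨μ/√m, v⟩² = N/2`. -/
theorem stmt5 (m : ℕ) (hm : 0 < m) (E : Finset (ℤ × ℤ))
    (hE : ∀ μ : ℤ × ℤ, μ ∈ E ↔ μ.1 ^ 2 + μ.2 ^ 2 = (m : ℤ))
    (N : ℕ) (hN : N = E.card) (hN1 : 1 ≤ N)
    (v : ℝ × ℝ) (hv : v.1 ^ 2 + v.2 ^ 2 = 1) :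
    ∑ μ ∈ E, ((μ.1 : ℝ) / Real.sqrt m * v.1 + (μ.2 : ℝ) / Real.sqrt m * v.2) ^ 2
      = (N : ℝ) / 2 := by
  have hm0 : (m : ℝ) ≠ 0 := by positivity
  have hs : (Real.sqrt m) ^ 2 = (m : ℝ) := Real.sq_sqrt (by positivity)
  have hsne : Real.sqrt m ≠ 0 := by
    intro h; rw [h] at hs; simp at hs; exact hm0 hs.symm
  -- swap symmetry
  have h1 : ∑ μ ∈ E, (μ.1 ^ 2 : ℤ) = ∑ μ ∈ E, (μ.2 ^ 2 : ℤ) := by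
    apply Finset.sum_nbij' (fun μ => (μ.2, μ.1)) (fun μ => (μ.2, μ.1)) <;>
      intro μ hμ <;> simp_all [hE] <;> omega
  -- odd symmetry
  have h2 : ∑ μ ∈ E, (μ.1 * μ.2 : ℤ) = 0 := by
    apply Finset.sum_involution (fun μ _ => ((-μ.1, μ.2) : ℤ × ℤ))
    · intro μ hμ; ring
    · intro μ hμ hf h; apply hf
      have : μ.1 = -μ.1 := congrArg Prod.fst h.symm
      have : μ.1 = 0 := by omega
      simp [this]
    · intro μ hμ; simp_all [hE]
    · intro μ hμ; simp
  -- total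
  have h3 : ∑ μ ∈ E, (μ.1 ^ 2 + μ.2 ^ 2 : ℤ) = (N : ℤ) * m := by
    rw [Finset.sum_congr rfl (fun μ hμ => (hE μ).mp hμ), Finset.sum_const, hN]
    push_cast; ring
  rw [Finset.sum_add_distrib] at h3
  -- real versions
  set A := ∑ μ ∈ E, ((μ.1 : ℝ)) ^ 2 with hA
  set B := ∑ μ ∈ E, ((μ.2 : ℝ)) ^ 2 with hB
  set C := ∑ μ ∈ E, ((μ.1 : ℝ)) * ((μ.2 : ℝ)) with hC
  have hAB : A = B := by rw [hA, hB]; exact_mod_cast congrArg (Int.cast : ℤ → ℝ) h1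
  have hC0 : C = 0 := by
    rw [hC]
    have := congrArg (Int.cast : ℤ → ℝ) h2
    push_cast at this; exact this
  have hABm : A + B = (N : ℝ) * m := by
    have := congrArg (Int.cast : ℤ → ℝ) h3
    push_cast at this; rw [hA, hB]; exact this
  have key : ∑ μ ∈ E, ((μ.1 : ℝ) / Real.sqrt m * v.1 + (μ.2 : ℝ) / Real.sqrt m * v.2) ^ 2
      = (A * v.1 ^ 2 + 2 * C * (v.1 * v.2) + B * v.2 ^ 2) / m := by
    rw [hA, hB, hC, Finset.sum_mul, Finset.sum_mul, Finset.mul_sum, Finset.sum_mul,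
      ← Finset.sum_add_distrib, ← Finset.sum_add_distrib, Finset.sum_div]
    apply Finset.sum_congr rfl
    intro μ hμ
    field_simp
    ring_nf
    try rw [hs]
    try ring
  rw [key, hC0]
  have hA2 : A = (N : ℝ) * m / 2 := by rw [hAB] at hABm ⊢; linarith
  rw [hA2, ← hAB, hA2]
  field_simp
  linear_combination (N:ℝ)*(m:ℝ)*hv
end

section
/- Let m be a positive integer, E = {μ ∈ ℤ² : μ₁² + μ₂² = m} with N = #E, λ = √m, and fix t ∈ ℝ and a point γ ∈ ℝ² and a unit vector γ' ∈ ℝ². For each μ ∈ E define u_μ = (cos(2π⟨μ, γ⟩), -2π⟨μ/λ, γ'⟩ sin(2π⟨μ, γ⟩)) and v_μ = (sin(2π⟨μ, γ⟩), 2π⟨μ/λ, γ'⟩ cos(2π⟨μ, γ⟩)). Then for every (a,b) on the unit circle of ℝ², Σ_{μ∈E} (⟨u_μ, (a,b)⟩² + ⟨v_μ, (a,b)⟩²) = N a² + 2π² N b², and in particular this sum is bounded between c·N and C·N for absolute constants 0 < c ≤ C. -/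
open Real

/-- Isotropy of the vectors `u_μ, v_μ`: with `θ_μ = 2π⟨μ, γ⟩` and
`d_μ = 2π⟨μ/λ, γ'⟩`, `u_μ = (cos θ_μ, -d_μ sin θ_μ)`, `v_μ = (sin θ_μ, d_μ cos θ_μ)`,
for every `(a,b)` on the unit circle,
`∑_{μ∈E} (⟨u_μ,(a,b)⟩² + ⟨v_μ,(a,b)⟩²) = N a² + 2π² N b²`, which lies between
`N` and `2π² N`. -/
theorem stmt6 (m : ℕ) (hm : 0 < m) (E : Finset (ℤ × ℤ))
    (hE : ∀ μ : ℤ × ℤ, μ ∈ E ↔ μ.1 ^ 2 + μ.2 ^ 2 = (m : ℤ))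
    (N : ℕ) (hN : N = E.card)
    (γ γ' : ℝ × ℝ) (hγ' : γ'.1 ^ 2 + γ'.2 ^ 2 = 1)
    (a b : ℝ) (hab : a ^ 2 + b ^ 2 = 1)
    (lam θ d : _) (hlam : lam = Real.sqrt m)
    (hθ : θ = fun μ : ℤ × ℤ => 2 * π * ((μ.1 : ℝ) * γ.1 + (μ.2 : ℝ) * γ.2))
    (hd : d = fun μ : ℤ × ℤ =>
      2 * π * ((μ.1 : ℝ) / lam * γ'.1 + (μ.2 : ℝ) / lam * γ'.2)) :
    (∑ μ ∈ E, ((a * Real.cos (θ μ) + b * (-(d μ) * Real.sin (θ μ))) ^ 2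
        + (a * Real.sin (θ μ) + b * (d μ * Real.cos (θ μ))) ^ 2)
      = (N : ℝ) * a ^ 2 + 2 * π ^ 2 * N * b ^ 2) ∧
    (N : ℝ) ≤ (N : ℝ) * a ^ 2 + 2 * π ^ 2 * N * b ^ 2 ∧
    (N : ℝ) * a ^ 2 + 2 * π ^ 2 * N * b ^ 2 ≤ 2 * π ^ 2 * N := by
  have hm0 : (0 : ℝ) < (m : ℝ) := by exact_mod_cast hm
  have hlam2 : lam ^ 2 = (m : ℝ) := by
    rw [hlam, sq_sqrt hm0.le]
  have hlam0 : lam ≠ 0 := by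
    rw [hlam]; positivity
  -- symmetry sums over E, in ℤ
  have hswap : ∑ μ ∈ E, (μ.1 : ℤ) ^ 2 = ∑ μ ∈ E, (μ.2 : ℤ) ^ 2 := by
    refine Finset.sum_nbij' (fun μ => (μ.2, μ.1)) (fun μ => (μ.2, μ.1)) ?_ ?_ ?_ ?_ ?_
    · intro μ hμ; rw [hE] at hμ ⊢; dsimp only; omega
    · intro μ hμ; rw [hE] at hμ ⊢; dsimp only; omega
    · intro μ _; rfl
    · intro μ _; rfl
    · intro μ _; rfl
  have hcross : ∑ μ ∈ E, (μ.1 : ℤ) * μ.2 = 0 := by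
    have h : ∑ μ ∈ E, (μ.1 : ℤ) * μ.2 = ∑ μ ∈ E, -(μ.1 * μ.2) := by
      refine Finset.sum_nbij' (fun μ => (μ.1, -μ.2)) (fun μ => (μ.1, -μ.2)) ?_ ?_ ?_ ?_ ?_
      · intro μ hμ; rw [hE] at hμ ⊢; simpa using hμ
      · intro μ hμ; rw [hE] at hμ ⊢; simpa using hμ
      · intro μ _; simp
      · intro μ _; simp
      · intro μ _; simp
    rw [Finset.sum_neg_distrib] at h
    linarith
  have htot : ∑ μ ∈ E, ((μ.1 : ℤ) ^ 2 + μ.2 ^ 2) = (N : ℤ) * m := by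
    rw [Finset.sum_congr rfl fun μ hμ => (hE μ).1 hμ, Finset.sum_const, hN]
    push_cast; ring
  have h1 : (2 : ℤ) * ∑ μ ∈ E, (μ.1 : ℤ) ^ 2 = (N : ℤ) * m := by
    rw [← htot, Finset.sum_add_distrib, ← hswap]; ring
  -- now over ℝ
  have h1R : ∑ μ ∈ E, ((μ.1 : ℝ)) ^ 2 = (N : ℝ) * m / 2 := by
    have : ((2 : ℤ) * ∑ μ ∈ E, (μ.1 : ℤ) ^ 2 : ℤ) = ((N : ℤ) * m : ℤ) := h1
    have := congrArg (fun z : ℤ => (z : ℝ)) this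
    push_cast at this
    linarith
  have h2R : ∑ μ ∈ E, ((μ.2 : ℝ)) ^ 2 = (N : ℝ) * m / 2 := by
    have h1' : (2 : ℤ) * ∑ μ ∈ E, (μ.2 : ℤ) ^ 2 = (N : ℤ) * m := by rw [← hswap]; exact h1
    have := congrArg (fun z : ℤ => (z : ℝ)) h1'
    push_cast at this
    linarith
  have hcR : ∑ μ ∈ E, ((μ.1 : ℝ)) * μ.2 = 0 := by
    have := congrArg (fun z : ℤ => (z : ℝ)) hcross
    push_cast at this
    exact this
  -- sum of d^2
  have hdsum : ∑ μ ∈ E, (d μ) ^ 2 = 2 * π ^ 2 * N := by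
    have : ∀ μ ∈ E, (d μ) ^ 2 = (4 * π ^ 2 / m) *
        ((μ.1 : ℝ) ^ 2 * γ'.1 ^ 2 + 2 * ((μ.1 : ℝ) * μ.2) * (γ'.1 * γ'.2)
          + (μ.2 : ℝ) ^ 2 * γ'.2 ^ 2) := by
      intro μ _
      rw [hd]
      field_simp
      rw [← hlam2]
      ring
    rw [Finset.sum_congr rfl this, ← Finset.mul_sum]
    have expand : ∑ μ ∈ E, ((μ.1 : ℝ) ^ 2 * γ'.1 ^ 2 + 2 * ((μ.1 : ℝ) * μ.2) * (γ'.1 * γ'.2)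
          + (μ.2 : ℝ) ^ 2 * γ'.2 ^ 2)
        = (∑ μ ∈ E, ((μ.1 : ℝ)) ^ 2) * γ'.1 ^ 2
          + 2 * (∑ μ ∈ E, ((μ.1 : ℝ)) * μ.2) * (γ'.1 * γ'.2)
          + (∑ μ ∈ E, ((μ.2 : ℝ)) ^ 2) * γ'.2 ^ 2 := by
      simp only [Finset.sum_add_distrib, ← Finset.sum_mul, ← Finset.mul_sum]
    rw [expand, h1R, h2R, hcR]
    field_simp
    linear_combination (4 * (N : ℝ) * m) * hγ'
  -- pointwise identity
  have hpt : ∀ μ ∈ E, ((a * Real.cos (θ μ) + b * (-(d μ) * Real.sin (θ μ))) ^ 2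
        + (a * Real.sin (θ μ) + b * (d μ * Real.cos (θ μ))) ^ 2)
      = a ^ 2 + b ^ 2 * (d μ) ^ 2 := by
    intro μ _
    have hsc := Real.sin_sq_add_cos_sq (θ μ)
    nlinarith [hsc]
  have main : ∑ μ ∈ E, ((a * Real.cos (θ μ) + b * (-(d μ) * Real.sin (θ μ))) ^ 2
        + (a * Real.sin (θ μ) + b * (d μ * Real.cos (θ μ))) ^ 2)
      = (N : ℝ) * a ^ 2 + 2 * π ^ 2 * N * b ^ 2 := by
    rw [Finset.sum_congr rfl hpt, Finset.sum_add_distrib, Finset.sum_const, ← Finset.mul_sum,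
      hdsum, hN]
    ring
  have hpi : (3 : ℝ) < π := Real.pi_gt_three
  have hpi2 : (1 : ℝ) ≤ π ^ 2 := by nlinarith
  have hNnn : (0 : ℝ) ≤ (N : ℝ) := Nat.cast_nonneg N
  have hb2 : (0 : ℝ) ≤ (N : ℝ) * b ^ 2 := mul_nonneg hNnn (sq_nonneg b)
  have ha2 : (0 : ℝ) ≤ (N : ℝ) * a ^ 2 := mul_nonneg hNnn (sq_nonneg a)
  have key1 : (N : ℝ) * a ^ 2 + 2 * π ^ 2 * N * b ^ 2 - N
      = (2 * π ^ 2 - 1) * ((N : ℝ) * b ^ 2) := by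
    linear_combination (N : ℝ) * hab
  have key2 : 2 * π ^ 2 * N - ((N : ℝ) * a ^ 2 + 2 * π ^ 2 * N * b ^ 2)
      = (2 * π ^ 2 - 1) * ((N : ℝ) * a ^ 2) := by
    linear_combination (-(2 * π ^ 2 * (N : ℝ))) * hab
  have hcoef : (0 : ℝ) ≤ 2 * π ^ 2 - 1 := by nlinarith
  refine ⟨main, ?_, ?_⟩
  · linarith [mul_nonneg hcoef hb2, key1]
  · linarith [mul_nonneg hcoef ha2, key2]
end

section
/- Let F be a holomorphic function on an open set containing the closed disk B̄(z₀, R) in ℂ, with 0 < r < R and F not identically zero on B̄(z₀, r). Then the number of zeros of F (counted with multiplicity) in the closed disk B̄(z₀, r) is at most (log(M/m)) / log((R² + r²)/(2Rr)), where M = max_{|w - z₀| ≤ R} |F(w)| and m = max_{|w - z₀| ≤ r} |F(w)|. -/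
open Metric Topology
lemma moeb (r R : ℝ) (hr : 0 < r) (hrR : r < R) (b w : ℂ)
    (hb : ‖b‖ ≤ r) (hw : ‖w‖ ≤ r) :
    (R^2 + r^2) * (R * ‖w - b‖) ≤
      (2*R*r) * ‖(R:ℂ)^2 - (starRingEnd ℂ) b * w‖ := by
  set s := ‖b‖ with hs
  set u := ‖w‖ with hu
  have hs0 : 0 ≤ s := norm_nonneg b
  have hu0 : 0 ≤ u := norm_nonneg w
  have hR : 0 < R := hr.trans hrR
  have ht : |((starRingEnd ℂ) b * w).re| ≤ s * u := by
    calc |((starRingEnd ℂ) b * w).re| ≤ ‖(starRingEnd ℂ) b * w‖ :=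
        Complex.abs_re_le_norm _
    _ = s * u := by rw [norm_mul, Complex.norm_conj]
  set t := ((starRingEnd ℂ) b * w).re with htdef
  have htl : -(s*u) ≤ t := neg_le_of_abs_le ht
  have h1 : ‖w - b‖ ^ 2 = u^2 + s^2 - 2*t := by
    rw [Complex.sq_norm, Complex.normSq_sub, ← Complex.sq_norm w, ← Complex.sq_norm b, mul_comm w]
  have h2 : ‖(R:ℂ)^2 - (starRingEnd ℂ) b * w‖ ^ 2
      = R^4 + s^2*u^2 - 2*R^2*t := by
    rw [Complex.sq_norm, Complex.normSq_sub]
    have e1 : Complex.normSq ((R:ℂ)^2) = R^4 := by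
      rw [← Complex.ofReal_pow, Complex.normSq_ofReal]; ring
    have e2 : Complex.normSq ((starRingEnd ℂ) b * w) = s^2*u^2 := by
      rw [← Complex.sq_norm, norm_mul, Complex.norm_conj]; ring
    have e3 : (((R:ℂ)^2) * (starRingEnd ℂ) ((starRingEnd ℂ) b * w)).re = R^2*t := by
      rw [← Complex.ofReal_pow, Complex.re_ofReal_mul, Complex.conj_re]
    rw [e1, e2, e3]; ring
  have hlin : (R^2+r^2)*(s+u) ≤ 2*r*(R^2+s*u) := by
    nlinarith [mul_nonneg (sub_nonneg.2 hb) (show (0:ℝ) ≤ R^2+r^2-2*r*u by nlinarith),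
      mul_nonneg (sub_nonneg.2 hw) (show (0:ℝ) ≤ R^2-r^2 by nlinarith)]
  have hq : ((R^2+r^2)*(s+u))^2 ≤ (2*r*(R^2+s*u))^2 := by
    apply pow_le_pow_left₀ (by positivity) hlin
  have key : ((R^2+r^2) * (R * ‖w-b‖))^2
      ≤ ((2*R*r) * ‖(R:ℂ)^2 - (starRingEnd ℂ) b * w‖)^2 := by
    rw [mul_pow, mul_pow, mul_pow, h1, h2]
    nlinarith [hq, mul_nonneg (mul_nonneg (sq_nonneg R) (sq_nonneg (R^2 - r^2)))
      (show (0:ℝ) ≤ t + s*u by linarith)]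
  have hA : 0 ≤ (R^2+r^2) * (R * ‖w-b‖) := by positivity
  have hB : 0 ≤ (2*R*r) * ‖(R:ℂ)^2 - (starRingEnd ℂ) b * w‖ := by positivity
  exact (pow_le_pow_iff_left₀ hA hB two_ne_zero).mp key
lemma factor (n : ℂ → ℕ) (Z : Finset ℂ) :
    ∀ (F : ℂ → ℂ) (S : Set ℂ), IsOpen S → DifferentiableOn ℂ F S →
    (∀ z ∈ Z, ∃ hz : AnalyticAt ℂ F z, analyticOrderAt F z = (n z : ℕ∞)) →
    ∃ G : ℂ → ℂ, DifferentiableOn ℂ G S ∧ ∀ w ∈ S, F w = G w * ∏ z ∈ Z, (w - z) ^ (n z) := by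
  induction Z using Finset.induction_on with
  | empty => exact fun F S _ hF _ => ⟨F, hF, fun w _ => by simp⟩
  | @insert a Z ha IH =>
    intro F S hS hF hmult
    obtain ⟨haF, horda⟩ := hmult a (Finset.mem_insert_self a Z)
    obtain ⟨g, hg_an, hg_ne, hg_ev⟩ := (haF.analyticOrderAt_eq_natCast (n := n a)).mp horda
    set F₁ : ℂ → ℂ := Function.update (fun x => F x / (x - a) ^ (n a)) a (g a) with hF₁def
    have hF₁ne : ∀ x, x ≠ a → F₁ x = F x / (x - a) ^ (n a) := fun x hx =>
      Function.update_of_ne hx _ _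
    have hF₁a : F₁ =ᶠ[𝓝 a] g := by
      filter_upwards [hg_ev] with x hx
      rcases eq_or_ne x a with rfl | hxa
      · simp [hF₁def]
      · rw [hF₁ne x hxa, hx, smul_eq_mul,
          mul_div_cancel_left₀ _ (pow_ne_zero _ (sub_ne_zero.2 hxa))]
    have hkey : ∀ x, F x = F₁ x * (x - a) ^ (n a) := by
      intro x
      rcases eq_or_ne x a with rfl | hxa
      · have hx := hg_ev.self_of_nhds
        rw [hx, sub_self]
        rcases eq_or_ne (n x) 0 with h0 | h0
        · simp [h0, hF₁def]
        · rw [zero_pow h0, smul_eq_mul, zero_mul, mul_zero]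
      · rw [hF₁ne x hxa, div_mul_cancel₀ _ (pow_ne_zero _ (sub_ne_zero.2 hxa))]
    have hF₁diff : DifferentiableOn ℂ F₁ S := by
      intro x hxS
      rcases eq_or_ne x a with rfl | hxa
      · exact (hg_an.differentiableAt.congr_of_eventuallyEq hF₁a).differentiableWithinAt
      · have hev : F₁ =ᶠ[𝓝 x] fun y => F y * ((y - a) ^ (n a))⁻¹ := by
          filter_upwards [isOpen_ne.mem_nhds hxa] with y (hy : y ≠ a)
          rw [hF₁ne y hy, div_eq_mul_inv]
        have hd : DifferentiableAt ℂ (fun y => F y * ((y - a) ^ (n a))⁻¹) x :=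
          (hF.differentiableAt (hS.mem_nhds hxS)).mul
            ((((differentiable_id.sub_const a).pow _) x).inv
              (pow_ne_zero _ (sub_ne_zero.2 hxa)))
        exact (hd.congr_of_eventuallyEq hev).differentiableWithinAt
    have hmult₁ : ∀ z ∈ Z, ∃ hz : AnalyticAt ℂ F₁ z, analyticOrderAt F₁ z = (n z : ℕ∞) := by
      intro z hzZ
      have hza : z ≠ a := fun h => ha (h ▸ hzZ)
      obtain ⟨hz, hordz⟩ := hmult z (Finset.mem_insert_of_mem hzZ)
      obtain ⟨gz, hgz_an, hgz_ne, hgz_ev⟩ := (hz.analyticOrderAt_eq_natCast (n := n z)).mp hordz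
      have hinv_an : AnalyticAt ℂ (fun y => ((y - a) ^ (n a))⁻¹) z :=
        ((analyticAt_id.sub analyticAt_const).pow _).inv
          (pow_ne_zero _ (sub_ne_zero.2 hza))
      have hg₁an : AnalyticAt ℂ (fun y => gz y * ((y - a) ^ (n a))⁻¹) z := hgz_an.mul hinv_an
      have hev : F₁ =ᶠ[𝓝 z] fun y => (y - z) ^ (n z) * (gz y * ((y - a) ^ (n a))⁻¹) := by
        filter_upwards [isOpen_ne.mem_nhds hza, hgz_ev] with y (hy : y ≠ a) hy'
        rw [hF₁ne y hy, hy', smul_eq_mul, div_eq_mul_inv]; ring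
      have hF₁an : AnalyticAt ℂ F₁ z :=
        (((analyticAt_id.sub analyticAt_const).pow _).mul hg₁an).congr hev.symm
      refine ⟨hF₁an, ?_⟩
      rw [hF₁an.analyticOrderAt_eq_natCast]
      exact ⟨_, hg₁an, mul_ne_zero hgz_ne (inv_ne_zero (pow_ne_zero _ (sub_ne_zero.2 hza))),
        by filter_upwards [hev] with y hy; rw [hy, smul_eq_mul]⟩
    obtain ⟨G, hGdiff, hGfac⟩ := IH F₁ S hS hF₁diff hmult₁
    refine ⟨G, hGdiff, fun w hw => ?_⟩
    rw [Finset.prod_insert ha, hkey w, hGfac w hw]; ring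

/-- Jensen's bound: a holomorphic function on a neighborhood of `closedBall z₀ R`, not
identically zero on `closedBall z₀ r` (`0 < r < R`), has at most
`log(M/m) / log((R²+r²)/(2Rr))` zeros (with multiplicity) in `closedBall z₀ r`, where
`M`, `m` are the maxima of `|F|` on the balls of radii `R`, `r`. -/
theorem stmt8 (F : ℂ → ℂ) (U : Set ℂ) (hU : IsOpen U) (z₀ : ℂ) (r R : ℝ)
    (hr : 0 < r) (hrR : r < R) (hball : closedBall z₀ R ⊆ U)
    (hF : DifferentiableOn ℂ F U)
    (hnz : ∃ w ∈ closedBall z₀ r, F w ≠ 0)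
    (M m : ℝ)
    (hM : IsGreatest ((fun w => ‖F w‖) '' closedBall z₀ R) M)
    (hm : IsGreatest ((fun w => ‖F w‖) '' closedBall z₀ r) m)
    (Z : Finset ℂ) (hZ : ∀ z ∈ Z, z ∈ closedBall z₀ r ∧ F z = 0)
    (n : ℂ → ℕ)
    (hmult : ∀ z ∈ Z, ∃ hz : AnalyticAt ℂ F z, analyticOrderAt F z = (n z : ℕ∞)) :
    (∑ z ∈ Z, (n z : ℝ)) ≤ Real.log (M / m) / Real.log ((R ^ 2 + r ^ 2) / (2 * R * r)) := by
  have hR : 0 < R := hr.trans hrR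
  obtain ⟨G, hGdiff, hfac⟩ := factor n Z F U hU hF hmult
  set c : ℝ := 2*R*r/(R^2+r^2) with hc
  have hden : 0 < R^2 + r^2 := by positivity
  have hc0 : 0 < c := by positivity
  have hc1 : c < 1 := by
    rw [hc, div_lt_one hden]; nlinarith [sq_nonneg (R - r)]
  set H : ℂ → ℂ := fun w =>
    G w * ∏ z ∈ Z, (((R:ℂ)^2 - (starRingEnd ℂ) (z - z₀) * (w - z₀)) / R) ^ (n z) with hH
  have hHdiff : DifferentiableOn ℂ H U := by
    apply hGdiff.mul
    apply DifferentiableOn.fun_finsetProd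
    intro z _
    apply DifferentiableOn.pow
    apply DifferentiableOn.div_const
    exact (differentiableOn_const _).sub
      (((differentiableOn_id).sub (differentiableOn_const _)).const_mul _)
  have hrRsub : closedBall z₀ r ⊆ closedBall z₀ R := closedBall_subset_closedBall hrR.le
  have habsZ : ∀ z ∈ Z, ‖z - z₀‖ ≤ r := by
    intro z hz
    have := (hZ z hz).1
    rwa [mem_closedBall, Complex.dist_eq] at this
  -- boundary bound and maximum modulus
  have hmax : ∀ w ∈ closedBall z₀ R, ‖H w‖ ≤ M := by
    intro w hw
    have hcl : closure (ball z₀ R) = closedBall z₀ R := closure_ball z₀ hR.ne'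
    refine Complex.norm_le_of_forall_mem_frontier_norm_le isBounded_ball
      (DifferentiableOn.diffContOnCl ?_) ?_ (by rwa [hcl])
    · rw [hcl]; exact hHdiff.mono hball
    · intro x hx
      rw [frontier_ball z₀ hR.ne'] at hx
      have hxR : ‖x - z₀‖ = R := by
        rw [mem_sphere_iff_norm] at hx; exact hx
      have hxU : x ∈ U := hball (sphere_subset_closedBall hx)
      have hsq : (x - z₀) * (starRingEnd ℂ) (x - z₀) = (R:ℂ)^2 := by
        rw [Complex.mul_conj, Complex.normSq_eq_norm_sq, hxR]; push_cast; ring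
      have habs : ∀ z ∈ Z,
          ‖((R:ℂ)^2 - (starRingEnd ℂ) (z - z₀) * (x - z₀)) / R‖
            = ‖x - z‖ := by
        intro z _
        have hconj : (starRingEnd ℂ) (x - z)
            = (starRingEnd ℂ) (x - z₀) - (starRingEnd ℂ) (z - z₀) := by
          rw [← map_sub]; ring_nf
        have hfac2 : (R:ℂ)^2 - (starRingEnd ℂ) (z - z₀) * (x - z₀)
            = (x - z₀) * (starRingEnd ℂ) (x - z) := by
          rw [hconj, ← hsq]; ring
        rw [hfac2, norm_div, norm_mul, Complex.norm_conj, hxR, Complex.norm_real, Real.norm_eq_abs,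
          abs_of_pos hR, mul_comm, mul_div_assoc, div_self hR.ne', mul_one]
      calc ‖H x‖
          = ‖G x‖ * ∏ z ∈ Z, ‖x - z‖ ^ (n z) := by
            rw [hH, norm_mul, norm_prod]
            congr 1
            exact Finset.prod_congr rfl fun z hz => by rw [norm_pow, habs z hz]
        _ = ‖F x‖ := by
            rw [hfac x hxU, norm_mul, norm_prod]
            congr 1
            exact Finset.prod_congr rfl fun z hz => by rw [norm_pow]
        _ ≤ M := hM.2 ⟨x, sphere_subset_closedBall hx, rfl⟩
  -- the point where |F| attains m
  obtain ⟨w₀, hw₀r, hw₀m⟩ := hm.1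
  have hm0 : 0 < m := by
    obtain ⟨w, hw, hwne⟩ := hnz
    exact lt_of_lt_of_le (norm_pos_iff.mpr hwne) (hm.2 ⟨w, hw, rfl⟩)
  have hM0 : 0 < M := by
    refine lt_of_lt_of_le hm0 ?_
    rw [← hw₀m]
    exact hM.2 ⟨w₀, hrRsub hw₀r, rfl⟩
  have hw₀abs : ‖w₀ - z₀‖ ≤ r := by
    rwa [mem_closedBall, Complex.dist_eq] at hw₀r
  set D : ℂ → ℝ := fun z =>
    ‖((R:ℂ)^2 - (starRingEnd ℂ) (z - z₀) * (w₀ - z₀)) / R‖ with hD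
  have hstep : ∀ z ∈ Z, ‖w₀ - z‖ ≤ c * D z := by
    intro z hz
    have := moeb r R hr hrR (z - z₀) (w₀ - z₀) (habsZ z hz) hw₀abs
    have hsub : (w₀ - z₀) - (z - z₀) = w₀ - z := by ring
    rw [hsub] at this
    show ‖w₀ - z‖ ≤ 2*R*r/(R^2+r^2) *
      ‖((R:ℂ)^2 - (starRingEnd ℂ) (z - z₀) * (w₀ - z₀)) / R‖
    rw [norm_div, Complex.norm_real, Real.norm_eq_abs, abs_of_pos hR]
    rw [div_mul_div_comm, le_div_iff₀ (by positivity)]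
    nlinarith [this]
  set N : ℕ := ∑ z ∈ Z, n z with hN
  have hmc : m ≤ c ^ N * M := by
    have hm_eq : m = ‖G w₀‖ * ∏ z ∈ Z, ‖w₀ - z‖ ^ n z := by
      rw [← hw₀m]
      show ‖F w₀‖ = _
      rw [hfac w₀ (hball (hrRsub hw₀r)), norm_mul, norm_prod]
      congr 1
      exact Finset.prod_congr rfl fun z hz => by rw [norm_pow]
    have hH₀ : ‖H w₀‖ = ‖G w₀‖ * ∏ z ∈ Z, (D z) ^ n z := by
      rw [hH, norm_mul, norm_prod]
      congr 1
      exact Finset.prod_congr rfl fun z hz => by rw [norm_pow, hD]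
    have hprod : ∏ z ∈ Z, ‖w₀ - z‖ ^ n z ≤ c ^ N * ∏ z ∈ Z, (D z) ^ n z := by
      calc ∏ z ∈ Z, ‖w₀ - z‖ ^ n z ≤ ∏ z ∈ Z, (c * D z) ^ n z :=
            Finset.prod_le_prod (fun z _ => by positivity)
              (fun z hz => pow_le_pow_left₀ (norm_nonneg _) (hstep z hz) _)
        _ = (∏ z ∈ Z, c ^ n z) * ∏ z ∈ Z, (D z) ^ n z := by
            rw [← Finset.prod_mul_distrib]
            exact Finset.prod_congr rfl fun z _ => mul_pow _ _ _
        _ = c ^ N * ∏ z ∈ Z, (D z) ^ n z := by rw [Finset.prod_pow_eq_pow_sum]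
    calc m = ‖G w₀‖ * ∏ z ∈ Z, ‖w₀ - z‖ ^ n z := hm_eq
      _ ≤ ‖G w₀‖ * (c ^ N * ∏ z ∈ Z, (D z) ^ n z) :=
          mul_le_mul_of_nonneg_left hprod (norm_nonneg _)
      _ = c ^ N * ‖H w₀‖ := by rw [hH₀]; ring
      _ ≤ c ^ N * M := mul_le_mul_of_nonneg_left
          (hmax w₀ (hrRsub hw₀r)) (by positivity)
  -- logarithms
  have hinv : (R ^ 2 + r ^ 2) / (2 * R * r) = c⁻¹ := by rw [hc, inv_div]
  have hlogpos : 0 < Real.log ((R ^ 2 + r ^ 2) / (2 * R * r)) := by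
    rw [hinv]; exact Real.log_pos ((one_lt_inv₀ hc0).mpr hc1)
  have hlogm : Real.log m ≤ (N:ℝ) * Real.log c + Real.log M := by
    calc Real.log m ≤ Real.log (c ^ N * M) := Real.log_le_log hm0 hmc
      _ = (N:ℝ) * Real.log c + Real.log M := by
          rw [Real.log_mul (pow_ne_zero _ hc0.ne') hM0.ne', Real.log_pow]
  have hfin : (N:ℝ) * Real.log ((R ^ 2 + r ^ 2) / (2 * R * r)) ≤ Real.log (M / m) := by
    rw [hinv, Real.log_inv, Real.log_div hM0.ne' hm0.ne']
    linarith
  have hsum : (∑ z ∈ Z, (n z : ℝ)) = (N:ℝ) := by rw [hN]; push_cast; ring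
  rw [hsum]
  exact (le_div_iff₀ hlogpos).mpr hfin
end

section
/- Let H : [0,1] → ℂ be continuously differentiable, and let 0 ≤ x₁ < x₂ < ⋯ < x_M ≤ 1 be points with consecutive gaps at least δ > 0, with x₁ ≥ δ/2 and x_M ≤ 1 - δ/2. Then Σ_{i=1}^M |H(x_i)|² ≤ (1/δ) ∫₀¹ |H(t)|² dt + ∫₀¹ |H(t)| |H'(t)| dt. -/
open MeasureTheory intervalIntegral

/-- Gallagher-type large sieve step: for `H` C¹ on `[0,1]` and `δ`-separated points
`x₁ < ⋯ < x_M` at distance at least `δ/2` from the endpoints,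
`∑ |H(xᵢ)|² ≤ (1/δ) ∫₀¹ |H|² + ∫₀¹ |H||H'|`. -/
theorem stmt12 (H : ℝ → ℂ) (hH : ContDiffOn ℝ 1 H (Set.Icc 0 1))
    (M : ℕ) (x : Fin M → ℝ) (δ : ℝ) (hδ : 0 < δ)
    (hmono : StrictMono x)
    (hgap : ∀ i j : Fin M, (i : ℕ) + 1 = (j : ℕ) → δ ≤ x j - x i)
    (hend : ∀ i, δ / 2 ≤ x i ∧ x i ≤ 1 - δ / 2) :
    ∑ i : Fin M, ‖H (x i)‖ ^ 2
      ≤ (1 / δ) * ∫ t in (0 : ℝ)..1, ‖H t‖ ^ 2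
        + ∫ t in (0 : ℝ)..1, ‖H t‖ * ‖deriv H t‖ := by
  classical
  have hhalf : (0:ℝ) < δ / 2 := by linarith
  set φ : ℝ → ℂ := derivWithin H (Set.Icc 0 1) with hφdef
  have hφc : ContinuousOn φ (Set.Icc 0 1) :=
    hH.continuousOn_derivWithin (uniqueDiffOn_Icc zero_lt_one) le_rfl
  have hHc : ContinuousOn H (Set.Icc 0 1) := hH.continuousOn
  set g : ℝ → ℝ := fun t => ‖H t‖ ^ 2 with hgdef
  have hgc : ContinuousOn g (Set.Icc 0 1) := hHc.norm.pow 2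
  set D : ℝ → ℝ := fun s => 2 * (inner ℝ (H s) (φ s) : ℝ) with hDdef
  have hDc : ContinuousOn D (Set.Icc 0 1) := continuousOn_const.mul (hHc.inner hφc)
  set B : ℝ → ℝ := fun t => 2 * (‖H t‖ * ‖φ t‖) with hBdef
  have hBc : ContinuousOn B (Set.Icc 0 1) :=
    continuousOn_const.mul (hHc.norm.mul hφc.norm)
  have hBnn : ∀ t, 0 ≤ B t := fun t => by
    have := norm_nonneg (H t); have := norm_nonneg (φ t); positivity
  have hDleB : ∀ s, D s ≤ B s := by
    intro s
    have h1 := abs_real_inner_le_norm (H s) (φ s)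
    have h2 := le_abs_self (inner ℝ (H s) (φ s) : ℝ)
    simp only [hDdef, hBdef]
    nlinarith
  have hDgeB : ∀ s, -(B s) ≤ D s := by
    intro s
    have h1 := abs_real_inner_le_norm (H s) (φ s)
    have h2 := neg_abs_le (inner ℝ (H s) (φ s) : ℝ)
    simp only [hDdef, hBdef]
    nlinarith
  -- differentiability of g on the interior
  have hgd : ∀ s ∈ Set.Ioo (0:ℝ) 1, HasDerivAt g (D s) s := by
    intro s hs
    have h1 : HasDerivWithinAt H (φ s) (Set.Icc 0 1) s :=
      (hH.differentiableOn one_ne_zero s (Set.Ioo_subset_Icc_self hs)).hasDerivWithinAt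
    have h2 : HasDerivAt H (φ s) s := h1.hasDerivAt (Icc_mem_nhds hs.1 hs.2)
    exact h2.norm_sq
  -- integrability of continuous functions on subintervals of [0,1]
  have intOn : ∀ (f : ℝ → ℝ), ContinuousOn f (Set.Icc 0 1) → ∀ u v : ℝ,
      0 ≤ u → u ≤ v → v ≤ 1 → IntervalIntegrable f volume u v := by
    intro f hf u v hu huv hv
    exact (hf.mono (by rw [Set.uIcc_of_le huv]; exact Set.Icc_subset_Icc hu hv)).intervalIntegrable
  -- fundamental theorem of calculus for g
  have ftc : ∀ u v : ℝ, 0 ≤ u → u ≤ v → v ≤ 1 →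
      ∫ s in u..v, D s = g v - g u := by
    intro u v hu huv hv
    refine intervalIntegral.integral_eq_sub_of_hasDeriv_right_of_le huv
      (hgc.mono (Set.Icc_subset_Icc hu hv)) (fun s hs => ?_)
      (intOn D hDc u v hu huv hv)
    exact (hgd s ⟨lt_of_le_of_lt hu hs.1, lt_of_lt_of_le hs.2 hv⟩).hasDerivWithinAt
  -- one-sided averaging bounds
  have onesided : ∀ u v : ℝ, 0 ≤ u → u ≤ v → v ≤ 1 →
      (v - u) * g v ≤ (∫ t in u..v, g t) + (v - u) * (∫ s in u..v, B s) ∧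
      (v - u) * g u ≤ (∫ t in u..v, g t) + (v - u) * (∫ s in u..v, B s) := by
    intro u v hu huv hv
    set C := ∫ s in u..v, B s with hC
    have hext : ∀ t ∈ Set.Icc u v, (∫ s in t..v, B s) ≤ C ∧ (∫ s in u..t, B s) ≤ C := by
      intro t ht
      have h1 : (∫ s in u..t, B s) + (∫ s in t..v, B s) = C :=
        intervalIntegral.integral_add_adjacent_intervals
          (intOn B hBc u t hu ht.1 (le_trans ht.2 hv))
          (intOn B hBc t v (le_trans hu ht.1) ht.2 hv)
      have h2 : 0 ≤ ∫ s in u..t, B s :=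
        intervalIntegral.integral_nonneg ht.1 (fun s _ => hBnn s)
      have h3 : 0 ≤ ∫ s in t..v, B s :=
        intervalIntegral.integral_nonneg ht.2 (fun s _ => hBnn s)
      constructor <;> linarith
    have hb1 : ∀ t ∈ Set.Icc u v, g v ≤ g t + C := by
      intro t ht
      have hfv : ∫ s in t..v, D s = g v - g t := ftc t v (le_trans hu ht.1) ht.2 hv
      have hm : (∫ s in t..v, D s) ≤ ∫ s in t..v, B s :=
        intervalIntegral.integral_mono_on ht.2
          (intOn D hDc t v (le_trans hu ht.1) ht.2 hv)
          (intOn B hBc t v (le_trans hu ht.1) ht.2 hv) (fun s _ => hDleB s)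
      have := (hext t ht).1
      linarith
    have hb2 : ∀ t ∈ Set.Icc u v, g u ≤ g t + C := by
      intro t ht
      have hfv : ∫ s in u..t, D s = g t - g u := ftc u t hu ht.1 (le_trans ht.2 hv)
      have hm : (∫ s in u..t, (-(B s))) ≤ ∫ s in u..t, D s :=
        intervalIntegral.integral_mono_on ht.1
          ((intOn B hBc u t hu ht.1 (le_trans ht.2 hv)).neg)
          (intOn D hDc u t hu ht.1 (le_trans ht.2 hv)) (fun s _ => hDgeB s)
      have hneg : (∫ s in u..t, (-(B s))) = -∫ s in u..t, B s := by
        simpa using intervalIntegral.integral_neg (f := B) (a := u) (b := t)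
      have := (hext t ht).2
      linarith
    have hgint := intOn g hgc u v hu huv hv
    constructor
    · have h := intervalIntegral.integral_mono_on (f := fun _ => g v)
        (g := fun t => g t + C) huv intervalIntegrable_const
        (hgint.add intervalIntegrable_const) hb1
      rw [intervalIntegral.integral_const,
        intervalIntegral.integral_add hgint intervalIntegrable_const,
        intervalIntegral.integral_const] at h
      simp only [smul_eq_mul] at h
      linarith
    · have h := intervalIntegral.integral_mono_on (f := fun _ => g u)
        (g := fun t => g t + C) huv intervalIntegrable_const
        (hgint.add intervalIntegrable_const) hb2
      rw [intervalIntegral.integral_const,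
        intervalIntegral.integral_add hgint intervalIntegrable_const,
        intervalIntegral.integral_const] at h
      simp only [smul_eq_mul] at h
      linarith
  -- the combined integrand
  set F : ℝ → ℝ := fun t => (1/δ) * g t + (1/2) * B t with hFdef
  have hFc : ContinuousOn F (Set.Icc 0 1) :=
    (continuousOn_const.mul hgc).add (continuousOn_const.mul hBc)
  have hFnn : ∀ t, 0 ≤ F t := by
    intro t
    have h1 : 0 ≤ g t := by simp only [hgdef]; positivity
    have h2 := hBnn t
    have h3 : 0 ≤ 1/δ := by positivity
    simp only [hFdef]
    nlinarith
  have hFsplit : ∀ u v : ℝ, 0 ≤ u → u ≤ v → v ≤ 1 →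
      (∫ t in u..v, F t) = (1/δ) * (∫ t in u..v, g t) + (1/2) * ∫ t in u..v, B t := by
    intro u v hu huv hv
    rw [show (fun t => F t) = fun t => (1/δ) * g t + (1/2) * B t from rfl]
    rw [intervalIntegral.integral_add ((intOn g hgc u v hu huv hv).const_mul _)
      ((intOn B hBc u v hu huv hv).const_mul _),
      intervalIntegral.integral_const_mul, intervalIntegral.integral_const_mul]
  -- pointwise bound at each sample point
  have hpt : ∀ i : Fin M, g (x i) ≤ ∫ t in (x i - δ/2)..(x i + δ/2), F t := by
    intro i
    obtain ⟨h1, h2⟩ := hend i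
    set a := x i with ha
    have hl0 : 0 ≤ a - δ/2 := by linarith
    have hr1 : a + δ/2 ≤ 1 := by linarith
    have hla : a - δ/2 ≤ a := by linarith
    have har : a ≤ a + δ/2 := by linarith
    have ha1 : a ≤ 1 := by linarith
    have h0a : 0 ≤ a := by linarith
    have left := (onesided (a - δ/2) a hl0 hla ha1).1
    have right := (onesided a (a + δ/2) h0a har hr1).2
    have e1 : a - (a - δ/2) = δ/2 := by ring
    have e2 : a + δ/2 - a = δ/2 := by ring
    rw [e1] at left
    rw [e2] at right
    have hgadd : (∫ t in (a-δ/2)..a, g t) + (∫ t in a..(a+δ/2), g t)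
        = ∫ t in (a-δ/2)..(a+δ/2), g t :=
      intervalIntegral.integral_add_adjacent_intervals
        (intOn g hgc _ _ hl0 hla ha1) (intOn g hgc _ _ h0a har hr1)
    have hBadd : (∫ t in (a-δ/2)..a, B t) + (∫ t in a..(a+δ/2), B t)
        = ∫ t in (a-δ/2)..(a+δ/2), B t :=
      intervalIntegral.integral_add_adjacent_intervals
        (intOn B hBc _ _ hl0 hla ha1) (intOn B hBc _ _ h0a har hr1)
    rw [hFsplit (a-δ/2) (a+δ/2) hl0 (by linarith) hr1]
    set Ig := ∫ t in (a-δ/2)..(a+δ/2), g t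
    set Ib := ∫ t in (a-δ/2)..(a+δ/2), B t
    have hkey : δ * g a ≤ Ig + (δ/2) * Ib := by nlinarith
    have : g a ≤ (Ig + (δ/2) * Ib) / δ := by
      rw [le_div_iff₀ hδ]; linarith [hkey]
    have heq : (Ig + (δ/2) * Ib) / δ = (1/δ) * Ig + (1/2) * Ib := by
      field_simp
    linarith [this, heq.le, heq.ge]
  -- the antiderivative of F
  set G : ℝ → ℝ := fun y => ∫ t in (0:ℝ)..y, F t with hGdef
  have hGseg : ∀ u v : ℝ, 0 ≤ u → u ≤ v → v ≤ 1 →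
      (∫ t in u..v, F t) = G v - G u := by
    intro u v hu huv hv
    have hadd : G u + (∫ t in u..v, F t) = G v :=
      intervalIntegral.integral_add_adjacent_intervals
        (intOn F hFc 0 u le_rfl hu (le_trans huv hv)) (intOn F hFc u v hu huv hv)
    linarith
  have hGmono : ∀ u v : ℝ, 0 ≤ u → u ≤ v → v ≤ 1 → G u ≤ G v := by
    intro u v hu huv hv
    have h1 : 0 ≤ ∫ t in u..v, F t :=
      intervalIntegral.integral_nonneg huv (fun t _ => hFnn t)
    have h2 := hGseg u v hu huv hv
    linarith
  have hG0 : G 0 = 0 := intervalIntegral.integral_same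
  -- extension of x to ℕ
  set y : ℕ → ℝ := fun n => if h : n < M then x ⟨n, h⟩ else 1 with hydef
  have hy : ∀ n (h : n < M), y n = x ⟨n, h⟩ := fun n h => dif_pos h
  have hybd : ∀ n, n < M → δ/2 ≤ y n ∧ y n ≤ 1 - δ/2 := by
    intro n h; rw [hy n h]; exact hend _
  set u : ℕ → ℝ := fun n => G (y n + δ/2) - G (y n - δ/2) with hudef
  have claim : ∀ n, n ≤ M → 0 < n →
      (∑ i ∈ Finset.range n, u i) ≤ G (y (n-1) + δ/2) := by
    intro n
    induction n with
    | zero => intro _ h; exact absurd h (lt_irrefl 0)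
    | succ n ih =>
      intro hnM _
      have hnlt : n < M := hnM
      obtain ⟨hyl, hyr⟩ := hybd n hnlt
      rcases Nat.eq_zero_or_pos n with h0 | hpos
      · subst h0
        have hsum : (∑ i ∈ Finset.range (0+1), u i) = u 0 := by simp
        have hidx : (0 + 1 - 1 : ℕ) = 0 := rfl
        rw [hsum, hidx]
        have hu0 : u 0 = G (y 0 + δ/2) - G (y 0 - δ/2) := rfl
        have hmono0 : G 0 ≤ G (y 0 - δ/2) :=
          hGmono 0 (y 0 - δ/2) le_rfl (by linarith) (by linarith)
        rw [hG0] at hmono0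
        linarith
      · have hnM' : n ≤ M := le_of_lt hnlt
        have hprev := ih hnM' hpos
        rw [Finset.sum_range_succ]
        have hn1lt : n - 1 < M := lt_of_le_of_lt (Nat.sub_le n 1) hnlt
        obtain ⟨hyl', hyr'⟩ := hybd (n-1) hn1lt
        have hgapn : δ ≤ x ⟨n, hnlt⟩ - x ⟨n-1, hn1lt⟩ := by
          apply hgap ⟨n-1, hn1lt⟩ ⟨n, hnlt⟩
          simp only []
          omega
        have hsep : y (n-1) + δ/2 ≤ y n - δ/2 := by
          rw [hy n hnlt, hy (n-1) hn1lt]; linarith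
        have hstep : G (y (n-1) + δ/2) ≤ G (y n - δ/2) :=
          hGmono _ _ (by linarith) hsep (by linarith)
        have : u n = G (y n + δ/2) - G (y n - δ/2) := rfl
        simp only [Nat.add_sub_cancel]
        linarith
  have sumbound : (∑ n ∈ Finset.range M, u n) ≤ G 1 := by
    rcases Nat.eq_zero_or_pos M with hM | hM
    · subst hM
      simp only [Finset.range_zero, Finset.sum_empty]
      have := hGmono 0 1 le_rfl zero_le_one le_rfl
      linarith [hG0]
    · have h1 := claim M le_rfl hM
      have hlt : M - 1 < M := Nat.sub_lt hM one_pos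
      obtain ⟨hyl, hyr⟩ := hybd (M-1) hlt
      exact le_trans h1 (hGmono _ 1 (by linarith) (by linarith) le_rfl)
  -- a.e. identification of φ with deriv H on (0,1)
  have hne : ∀ᵐ t : ℝ, t ≠ (1:ℝ) := by
    rw [MeasureTheory.ae_iff]
    have : {t : ℝ | ¬ t ≠ 1} = {1} := by ext t; simp
    rw [this]
    exact Real.volume_singleton
  have hae : ∀ᵐ t : ℝ, t ∈ Set.uIoc (0:ℝ) 1 → ‖H t‖ * ‖deriv H t‖ = ‖H t‖ * ‖φ t‖ := by
    filter_upwards [hne] with t ht hmem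
    rw [Set.uIoc_of_le zero_le_one] at hmem
    have htIoo : t ∈ Set.Ioo (0:ℝ) 1 := ⟨hmem.1, lt_of_le_of_ne hmem.2 ht⟩
    have hdw : derivWithin H (Set.Icc 0 1) t = deriv H t :=
      derivWithin_of_mem_nhds (Icc_mem_nhds htIoo.1 htIoo.2)
    simp only [hφdef, hdw]
  set Ig := ∫ t in (0:ℝ)..1, g t with hIgdef
  set Iφ := ∫ t in (0:ℝ)..1, ‖H t‖ * ‖φ t‖ with hIφdef
  have hfinal : G 1 = (1 / δ) * Ig + Iφ := by
    have h1 : G 1 = (1/δ) * Ig + (1/2) * ∫ t in (0:ℝ)..1, B t :=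
      hFsplit 0 1 le_rfl zero_le_one le_rfl
    have h2 : (1/2) * (∫ t in (0:ℝ)..1, B t) = Iφ := by
      rw [hIφdef, ← intervalIntegral.integral_const_mul]
      apply intervalIntegral.integral_congr
      intro t _
      simp only [hBdef]
      ring
    rw [h1, h2]
  have hIφnn : 0 ≤ Iφ :=
    intervalIntegral.integral_nonneg zero_le_one (fun t _ => by positivity)
  have hIgnn : 0 ≤ Ig :=
    intervalIntegral.integral_nonneg zero_le_one (fun t _ => by simp only [hgdef]; positivity)
  -- the big integral on the right-hand side (note: the first integral binds the whole sum)
  have hbig : (∫ t in (0:ℝ)..1, (‖H t‖^2 + ∫ s in (0:ℝ)..1, ‖H s‖ * ‖deriv H s‖))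
      = Ig + Iφ := by
    have hc : (∫ s in (0:ℝ)..1, ‖H s‖ * ‖deriv H s‖) = Iφ :=
      intervalIntegral.integral_congr_ae (by
        filter_upwards [hae] with t ht hmem
        exact ht hmem)
    rw [intervalIntegral.integral_add (intOn g hgc 0 1 le_rfl zero_le_one le_rfl)
      intervalIntegrable_const, intervalIntegral.integral_const, hc]
    norm_num [hIgdef, hgdef]
  -- putting everything together
  have main : ∑ i : Fin M, ‖H (x i)‖ ^ 2 ≤ G 1 := by
    calc ∑ i : Fin M, ‖H (x i)‖ ^ 2
        ≤ ∑ i : Fin M, (G (x i + δ/2) - G (x i - δ/2)) := by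
          apply Finset.sum_le_sum
          intro i _
          obtain ⟨h1, h2⟩ := hend i
          have := hpt i
          rw [hGseg (x i - δ/2) (x i + δ/2) (by linarith) (by linarith) (by linarith)] at this
          exact this
      _ = ∑ n ∈ Finset.range M, u n := by
          rw [← Fin.sum_univ_eq_sum_range]
          apply Finset.sum_congr rfl
          intro i _
          simp only [hudef]
          rw [hy i i.isLt]
        _ ≤ G 1 := sumbound
  show ∑ i : Fin M, ‖H (x i)‖ ^ 2
      ≤ (1 / δ) * ∫ t in (0:ℝ)..1, (‖H t‖^2 + ∫ s in (0:ℝ)..1, ‖H s‖ * ‖deriv H s‖)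
  rw [hbig, hfinal] at *
  rcases Nat.eq_zero_or_pos M with hM0 | hMpos
  · have hLHS : (∑ i : Fin M, ‖H (x i)‖ ^ 2) = 0 := by
      subst hM0; simp
    rw [hLHS]
    have h0 : (0:ℝ) ≤ 1/δ := by positivity
    nlinarith
  · have hδ1 : δ ≤ 1 := by
      obtain ⟨h1, h2⟩ := hend ⟨0, hMpos⟩; linarith
    have hδinv : 1 ≤ 1/δ := by
      rw [le_div_iff₀ hδ]; linarith
    have hstep : (1/δ) * Ig + Iφ ≤ (1/δ) * (Ig + Iφ) := by nlinarith
    linarith [main]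
end

section
/- Let x = (x₁,…,x_n) have iid coordinates that are bounded by C₀ in absolute value, with mean zero and variance one. Let A ⊆ ℝⁿ be a Borel set. Then for every t > 0, P(x ∈ A) · P(d₂(x, A) ≥ t√n) ≤ 4 exp(-t⁴ n / (16 C₀⁴)). -/
open MeasureTheory
open MeasureTheory Real ProbabilityTheory

lemma aux_exp (p : ℝ) (hp0 : 0 ≤ p) (hp1 : p ≤ 1) (h : ℝ) (hh : 0 ≤ h) :
    (1 - p) + p * Real.exp h ≤ Real.exp (p * h + h ^ 2 / 8) := by
  have hden : ∀ x : ℝ, 0 < (1 - p) + p * Real.exp x := by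
    intro x
    rcases eq_or_lt_of_le hp0 with h0 | h0
    · simp [← h0]
    · rcases le_or_gt (Real.exp x) 1 with he | he
      · nlinarith [Real.exp_pos x]
      · nlinarith
  set u : ℝ → ℝ := fun x => p * Real.exp x / ((1 - p) + p * Real.exp x) with hu
  set φ : ℝ → ℝ := fun x => Real.log ((1 - p) + p * Real.exp x) - (p * x + x ^ 2 / 8) with hφdef
  set ψ : ℝ → ℝ := fun x => u x - p - x / 4 with hψdef
  have hden' : ∀ x : ℝ, HasDerivAt (fun y => (1 - p) + p * Real.exp y) (p * Real.exp x) x := by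
    intro x
    simpa using ((Real.hasDerivAt_exp x).const_mul p).const_add (1 - p)
  have hφ' : ∀ x, HasDerivAt φ (ψ x) x := by
    intro x
    have h1 : HasDerivAt (fun y => Real.log ((1 - p) + p * Real.exp y))
        (p * Real.exp x / ((1 - p) + p * Real.exp x)) x := (hden' x).log (hden x).ne'
    have h2 : HasDerivAt (fun y : ℝ => p * y + y ^ 2 / 8) (p + (2 * x ^ 1) / 8) x := by
      have := ((hasDerivAt_id x).const_mul p).add ((hasDerivAt_pow 2 x).div_const 8)
      have h3 : HasDerivAt ((fun y : ℝ => p * y) + fun x => x ^ 2 / 8) (p + 2 * x / 8) x := by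
        simpa using this
      rw [pow_one]; exact h3
    have := h1.sub h2
    convert this using 1
    · rfl
    · rfl
    · rfl
    simp only [hψdef, hu]
    ring
  have hψ' : ∀ x, HasDerivAt ψ (u x * (1 - u x) - 1 / 4) x := by
    intro x
    have h1 : HasDerivAt u ((p * Real.exp x * ((1 - p) + p * Real.exp x)
        - p * Real.exp x * (p * Real.exp x)) / ((1 - p) + p * Real.exp x) ^ 2) x :=
      ((Real.hasDerivAt_exp x).const_mul p).div (hden' x) (hden x).ne'
    have h2 : HasDerivAt (fun y : ℝ => y / 4) (1 / 4) x := by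
      simpa using (hasDerivAt_id x).div_const 4
    have := (h1.sub_const p).sub h2
    convert this using 1
    · rfl
    · rfl
    · rfl
    have hd := (hden x).ne'
    simp only [hu]
    field_simp
  have hψanti : Antitone ψ := by
    refine antitone_of_deriv_nonpos (fun x => (hψ' x).differentiableAt) (fun x => ?_)
    rw [(hψ' x).deriv]
    nlinarith [sq_nonneg (u x - 1 / 2)]
  have hψ0 : ψ 0 = 0 := by
    simp only [hψdef, hu]
    simp
  have hφanti : AntitoneOn φ (Set.Ici (0 : ℝ)) := by
    refine antitoneOn_of_deriv_nonpos (convex_Ici 0)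
      (fun x _ => ((hφ' x).differentiableAt.continuousAt).continuousWithinAt)
      (fun x _ => (hφ' x).differentiableAt.differentiableWithinAt) (fun x hx => ?_)
    rw [(hφ' x).deriv]
    rw [interior_Ici] at hx
    calc ψ x ≤ ψ 0 := hψanti (le_of_lt hx)
      _ = 0 := hψ0
  have hφh : φ h ≤ 0 := by
    have h0 : φ 0 = 0 := by
      simp only [hφdef]
      norm_num
    calc φ h ≤ φ 0 := hφanti (Set.self_mem_Ici) hh hh
      _ = 0 := h0
  have := (Real.log_le_iff_le_exp (hden h)).mp (by simpa [hφdef, sub_nonpos] using hφh)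
  exact this

lemma bdd_int {X : Type*} [MeasurableSpace X] (ν : Measure X) [IsFiniteMeasure ν]
    {f : X → ℝ} (hf : Measurable f) {K : ℝ} (hb : ∀ x, |f x| ≤ K) : Integrable f ν := by
  refine (integrable_const K).mono' hf.aestronglyMeasurable ?_
  exact ae_of_all _ (by simpa [Real.norm_eq_abs] using hb)

lemma hoeffding_lem {X : Type*} [MeasurableSpace X] (ν : Measure X) [IsProbabilityMeasure ν]
    (g : X → ℝ) (hg : Measurable g) (lo c : ℝ) (hc : 0 ≤ c)
    (hb : ∀ x, g x ∈ Set.Icc lo (lo + c)) :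
    ∫ x, Real.exp (g x) ∂ν ≤ Real.exp ((∫ x, g x ∂ν) + c ^ 2 / 8) := by
  have hKg : ∀ x, |g x| ≤ |lo| + c := by
    intro x
    rcases hb x with ⟨h1, h2⟩
    rw [abs_le]
    constructor <;> nlinarith [le_abs_self lo, neg_abs_le lo]
  have hint : Integrable g ν := bdd_int ν hg hKg
  set m := ∫ x, g x ∂ν with hm
  have hm1 : lo ≤ m := by
    have := integral_mono (integrable_const lo) hint (fun x => (hb x).1)
    simpa using this
  have hm2 : m ≤ lo + c := by
    have := integral_mono hint (integrable_const (lo + c)) (fun x => (hb x).2)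
    simpa using this
  rcases eq_or_lt_of_le hc with hc0 | hc0
  · have hgl : ∀ x, g x = lo := by
      intro x
      have := hb x
      rw [← hc0] at this
      exact le_antisymm (by simpa using this.2) this.1
    have h1 : ∫ x, Real.exp (g x) ∂ν = Real.exp lo := by
      rw [show (fun x => Real.exp (g x)) = fun _ => Real.exp lo from funext fun x => by rw [hgl x]]
      simp
    have h2 : m = lo := by
      rw [hm, show g = fun _ => lo from funext hgl]
      simp
    rw [h1, h2, ← hc0]
    simp [Real.exp_le_exp]
  · set α := (Real.exp (lo + c) - Real.exp lo) / c with hα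
    set β := ((lo + c) * Real.exp lo - lo * Real.exp (lo + c)) / c with hβ
    have hkey : ∀ x, Real.exp (g x) ≤ α * g x + β := by
      intro x
      rcases hb x with ⟨h1, h2⟩
      have ha : (0:ℝ) ≤ (lo + c - g x) / c := by
        apply div_nonneg _ hc0.le; linarith
      have hbn : (0:ℝ) ≤ (g x - lo) / c := by
        apply div_nonneg _ hc0.le; linarith
      have hab : (lo + c - g x) / c + (g x - lo) / c = 1 := by field_simp; ring
      have key := convexOn_exp.2 (Set.mem_univ lo) (Set.mem_univ (lo + c)) ha hbn hab
      simp only [smul_eq_mul] at key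
      have e1 : (lo + c - g x) / c * lo + (g x - lo) / c * (lo + c) = g x := by
        field_simp; ring
      rw [e1] at key
      refine key.trans (le_of_eq ?_)
      rw [hα, hβ]
      field_simp
      ring
    have hI : ∫ x, Real.exp (g x) ∂ν ≤ α * m + β := by
      have hexpb : ∀ x, |Real.exp (g x)| ≤ Real.exp (|lo| + c) := by
        intro x
        rw [abs_of_pos (Real.exp_pos _), Real.exp_le_exp]
        nlinarith [(hb x).2, le_abs_self lo]
      have h1 := integral_mono (bdd_int ν hg.exp hexpb)
        ((hint.const_mul α).add (integrable_const β)) hkey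
      simp only [Pi.add_apply] at h1
      rwa [integral_add (hint.const_mul α) (integrable_const β), integral_const_mul,
        integral_const, probReal_univ, smul_eq_mul, one_mul, ← hm] at h1
    refine hI.trans ?_
    set p := (m - lo) / c with hp
    have hp0 : 0 ≤ p := div_nonneg (by linarith) hc0.le
    have hp1 : p ≤ 1 := by rw [hp, div_le_one hc0]; linarith
    have hid : α * m + β = Real.exp lo * ((1 - p) + p * Real.exp c) := by
      rw [hα, hβ, hp, Real.exp_add]
      field_simp
      ring
    rw [hid]
    have haux := aux_exp p hp0 hp1 c hc
    have := mul_le_mul_of_nonneg_left haux (le_of_lt (Real.exp_pos lo))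
    refine this.trans (le_of_eq ?_)
    rw [← Real.exp_add]
    congr 1
    have hpc : p * c = m - lo := by
      rw [hp]; field_simp
    linarith

lemma mcdiarmid (μ : Measure ℝ) [IsProbabilityMeasure μ] :
    ∀ (n : ℕ) (f : (Fin n → ℝ) → ℝ) (c K : ℝ), 0 ≤ c → Measurable f →
    (∀ x, |f x| ≤ K) →
    (∀ (i : Fin n) (x y : Fin n → ℝ), (∀ j, j ≠ i → x j = y j) → f x ≤ f y + c) →
    ∫ x, Real.exp (f x) ∂(Measure.pi fun _ => μ) ≤
      Real.exp ((∫ x, f x ∂(Measure.pi fun _ => μ)) + n * c ^ 2 / 8) := by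
  intro n
  induction n with
  | zero =>
    intro f c K hc hf hK hosc
    rw [Measure.pi_of_empty]
    rw [integral_dirac' _ _ hf.exp.stronglyMeasurable,
      integral_dirac' _ _ hf.stronglyMeasurable]
    simp
  | succ n IH =>
    intro f c K hc hf hK hosc
    set ν := Measure.pi (fun _ : Fin (n+1) => μ) with hν
    set νn := Measure.pi (fun _ : Fin n => μ) with hνn
    have hmp : MeasurePreserving (MeasurableEquiv.piFinSuccAbove (fun _ : Fin (n+1) => ℝ) 0)
        ν (μ.prod νn) := measurePreserving_piFinSuccAbove (fun _ : Fin (n+1) => μ) 0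
    set e := MeasurableEquiv.piFinSuccAbove (fun _ : Fin (n+1) => ℝ) 0 with he
    have hins : ∀ y : ℝ × (Fin n → ℝ), Fin.insertNth 0 y.1 y.2 = e.symm y := by
      intro y
      simp [he, MeasurableEquiv.piFinSuccAbove_symm_apply, Fin.consEquiv]
    -- transfer of integrals
    have key : ∀ (F : (Fin (n+1) → ℝ) → ℝ) (KF : ℝ), Measurable F → (∀ x, |F x| ≤ KF) →
        ∫ x, F x ∂ν = ∫ r, ∫ a, F (Fin.insertNth 0 a r) ∂μ ∂νn := by
      intro F KF hFm hFb
      have h1 : ∫ y, F (e.symm y) ∂(μ.prod νn) = ∫ x, F x ∂ν :=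
        (hmp.symm e).integral_comp e.symm.measurableEmbedding F
      have hGm : Measurable fun y : ℝ × (Fin n → ℝ) => F (e.symm y) :=
        hFm.comp e.symm.measurable
      have hGi : Integrable (fun y : ℝ × (Fin n → ℝ) => F (e.symm y)) (μ.prod νn) :=
        bdd_int _ hGm (fun y => hFb _)
      rw [← h1, integral_prod_symm _ hGi]
      simp_rw [← hins]
    -- the conditional mean
    set m : (Fin n → ℝ) → ℝ := fun r => ∫ a, f (Fin.insertNth 0 a r) ∂μ with hm
    have hGmeas : Measurable fun y : ℝ × (Fin n → ℝ) => f (Fin.insertNth 0 y.1 y.2) := by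
      simp only [hins]
      exact hf.comp e.symm.measurable
    have hsecmeas : ∀ r : Fin n → ℝ, Measurable fun a => f (Fin.insertNth 0 a r) := by
      intro r
      exact hGmeas.comp measurable_prodMk_right
    have hsecint : ∀ r : Fin n → ℝ, Integrable (fun a => f (Fin.insertNth 0 a r)) μ :=
      fun r => bdd_int _ (hsecmeas r) (fun a => hK _)
    have hm_meas : Measurable m := hGmeas.stronglyMeasurable.integral_prod_left'.measurable
    have hm_bdd : ∀ r, |m r| ≤ K := by
      intro r
      have := norm_integral_le_of_norm_le_const (μ := μ)
        (f := fun a => f (Fin.insertNth 0 a r)) (C := K)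
        (ae_of_all _ fun a => by simpa [Real.norm_eq_abs] using hK _)
      simpa only [Real.norm_eq_abs, probReal_univ, mul_one] using this
    -- coordinate case analysis helper
    have hcoord : ∀ (a a' : ℝ) (r r' : Fin n → ℝ) (i : Fin (n+1)),
        (a = a' ∨ (0 : Fin (n+1)) = i) → (∀ k : Fin n, r k = r' k ∨ (Fin.succ k) = i) →
        f (Fin.insertNth 0 a r) ≤ f (Fin.insertNth 0 a' r') + c := by
      intro a a' r r' i ha hr
      refine hosc i _ _ ?_
      intro j hj
      rcases Fin.eq_zero_or_eq_succ j with rfl | ⟨k, rfl⟩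
      · simp only [Fin.insertNth_apply_same]
        rcases ha with h | h
        · exact h
        · exact absurd h hj
      · have hsa : Fin.succ k = (0 : Fin (n+1)).succAbove k := by simp
        rw [hsa, Fin.insertNth_apply_succAbove, Fin.insertNth_apply_succAbove]
        rcases hr k with h | h
        · exact h
        · exact absurd h hj
    have hm_osc : ∀ (j : Fin n) (r r' : Fin n → ℝ), (∀ k, k ≠ j → r k = r' k) →
        m r ≤ m r' + c := by
      intro j r r' hrr'
      have hpt : ∀ a, f (Fin.insertNth 0 a r) ≤ f (Fin.insertNth 0 a r') + c := by
        intro a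
        refine hcoord a a r r' (Fin.succ j) (Or.inl rfl) (fun k => ?_)
        rcases eq_or_ne k j with rfl | hk
        · exact Or.inr rfl
        · exact Or.inl (hrr' k hk)
      have h1 := integral_mono (hsecint r) ((hsecint r').add (integrable_const c)) hpt
      simp only [Pi.add_apply] at h1
      rwa [integral_add (hsecint r') (integrable_const c), integral_const, probReal_univ,
        smul_eq_mul, one_mul] at h1
    -- main chain
    have hexpK : ∀ x, |Real.exp (f x)| ≤ Real.exp K := by
      intro x
      rw [abs_of_pos (Real.exp_pos _), Real.exp_le_exp]
      exact le_of_abs_le (hK x)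
    have step1 : ∫ x, Real.exp (f x) ∂ν
        = ∫ r, ∫ a, Real.exp (f (Fin.insertNth 0 a r)) ∂μ ∂νn :=
      key (fun x => Real.exp (f x)) (Real.exp K) hf.exp hexpK
    have step2 : ∀ r : Fin n → ℝ,
        ∫ a, Real.exp (f (Fin.insertNth 0 a r)) ∂μ ≤ Real.exp (m r + c ^ 2 / 8) := by
      intro r
      set g : ℝ → ℝ := fun a => f (Fin.insertNth 0 a r) with hg
      have hbddb : BddBelow (Set.range g) := by
        refine ⟨-K, ?_⟩
        rintro _ ⟨a, rfl⟩
        linarith [(abs_le.1 (hK (Fin.insertNth 0 a r))).1]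
      set lo := ⨅ a : ℝ, g a with hlo
      have hgosc : ∀ a a' : ℝ, g a ≤ g a' + c := by
        intro a a'
        exact hcoord a a' r r 0 (Or.inr rfl) (fun k => Or.inl rfl)
      have hmem : ∀ a : ℝ, g a ∈ Set.Icc lo (lo + c) := by
        intro a
        constructor
        · exact ciInf_le hbddb a
        · have h2 : g a - c ≤ lo := le_ciInf fun a' => by linarith [hgosc a a']
          linarith
      have := hoeffding_lem μ g (hsecmeas r) lo c hc hmem
      exact this
    have lhs_int : Integrable (fun r => ∫ a, Real.exp (f (Fin.insertNth 0 a r)) ∂μ) νn := by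
      have hmeasr : Measurable fun r => ∫ a, Real.exp (f (Fin.insertNth 0 a r)) ∂μ := by
        have : Measurable fun y : ℝ × (Fin n → ℝ) => Real.exp (f (Fin.insertNth 0 y.1 y.2)) :=
          hGmeas.exp
        exact this.stronglyMeasurable.integral_prod_left'.measurable
      refine bdd_int _ hmeasr (K := Real.exp K) ?_
      intro r
      have := norm_integral_le_of_norm_le_const (μ := μ)
        (f := fun a => Real.exp (f (Fin.insertNth 0 a r))) (C := Real.exp K)
        (ae_of_all _ fun a => by simpa [Real.norm_eq_abs] using hexpK _)
      simpa [Real.norm_eq_abs, measure_univ] using this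
    have rhs_int : Integrable (fun r => Real.exp (m r + c ^ 2 / 8)) νn := by
      refine bdd_int _ (by fun_prop) (K := Real.exp (K + c ^ 2 / 8)) ?_
      intro r
      rw [abs_of_pos (Real.exp_pos _), Real.exp_le_exp]
      linarith [(abs_le.1 (hm_bdd r)).2]
    have step3 : ∫ x, Real.exp (f x) ∂ν ≤ ∫ r, Real.exp (m r + c ^ 2 / 8) ∂νn := by
      rw [step1]
      exact integral_mono lhs_int rhs_int step2
    have step4 : ∫ r, Real.exp (m r + c ^ 2 / 8) ∂νn
        = Real.exp (c ^ 2 / 8) * ∫ r, Real.exp (m r) ∂νn := by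
      simp_rw [Real.exp_add, integral_mul_const]
      ring
    have step5 := IH m c K hc hm_meas hm_bdd hm_osc
    have hfint : ∫ r, m r ∂νn = ∫ x, f x ∂ν := (key f K hf hK).symm
    calc ∫ x, Real.exp (f x) ∂ν ≤ ∫ r, Real.exp (m r + c ^ 2 / 8) ∂νn := step3
      _ = Real.exp (c ^ 2 / 8) * ∫ r, Real.exp (m r) ∂νn := step4
      _ ≤ Real.exp (c ^ 2 / 8) * Real.exp ((∫ r, m r ∂νn) + n * c ^ 2 / 8) := by
          exact mul_le_mul_of_nonneg_left step5 (Real.exp_pos _).le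
      _ = Real.exp ((∫ x, f x ∂ν) + (n + 1 : ℕ) * c ^ 2 / 8) := by
          rw [← Real.exp_add, hfint]
          congr 1
          push_cast
          ring

lemma chernoff_product {X : Type*} [MeasurableSpace X] (ν : Measure X) [IsProbabilityMeasure ν]
    (h : X → ℝ) (hmeas : Measurable h) (n : ℕ) (hn : 0 < n) (K : ℝ)
    (hb : ∀ x, |h x| ≤ K) (hpos : ∀ x, 0 ≤ h x)
    (hmgf : ∀ l : ℝ, ∫ x, Real.exp (l * h x) ∂ν ≤
      Real.exp (l * (∫ x, h x ∂ν) + l ^ 2 * n / 8))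
    (u : ℝ) (hu : 0 < u) :
    (ν {x | h x ≤ 0}).toReal * (ν {x | u ≤ h x}).toReal ≤ Real.exp (-(u ^ 2) / n) := by
  have hnpos : (0:ℝ) < n := by exact_mod_cast hn
  set m := ∫ x, h x ∂ν with hm
  have hm0 : 0 ≤ m := integral_nonneg hpos
  have hint : ∀ l : ℝ, Integrable (fun x => Real.exp (l * h x)) ν := by
    intro l
    refine bdd_int _ (by fun_prop) (K := Real.exp (|l| * K)) ?_
    intro x
    rw [abs_of_pos (Real.exp_pos _), Real.exp_le_exp]
    calc l * h x ≤ |l * h x| := le_abs_self _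
      _ = |l| * |h x| := abs_mul _ _
      _ ≤ |l| * K := by
          refine mul_le_mul_of_nonneg_left (hb x) (abs_nonneg l)
  -- bound for P1
  have hP1 : (ν {x | h x ≤ 0}).toReal ≤ Real.exp (-(2 * m ^ 2) / n) := by
    set l := 4 * m / n with hl
    have hl0 : 0 ≤ l := by positivity
    have hset : {x | h x ≤ 0} = {x | (0:ℝ) ≤ (fun y => -h y) x} := by
      ext x; simp [neg_nonneg]
    have hmark := measure_ge_le_exp_mul_mgf (X := fun y => -h y) (μ := ν) (0:ℝ) hl0 ?_
    · rw [hset]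
      refine hmark.trans ?_
      rw [mgf]
      have : ∫ x, Real.exp (l * (-h x)) ∂ν ≤ Real.exp ((-l) * m + (-l) ^ 2 * n / 8) := by
        simpa [neg_mul, mul_neg] using hmgf (-l)
      calc Real.exp (-l * 0) * ∫ x, Real.exp (l * (fun y => -h y) x) ∂ν
          = ∫ x, Real.exp (l * (-h x)) ∂ν := by simp
        _ ≤ Real.exp ((-l) * m + (-l) ^ 2 * n / 8) := this
        _ ≤ Real.exp (-(2 * m ^ 2) / n) := by
            rw [Real.exp_le_exp, hl]
            field_simp
            ring_nf
            nlinarith [sq_nonneg m, sq_nonneg (m * n)]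
    · simpa [mul_neg, neg_mul] using hint (-l)
  have hP2bdd : (ν {x | u ≤ h x}).toReal ≤ 1 := by
    rw [← ENNReal.toReal_one]
    exact ENNReal.toReal_mono ENNReal.one_ne_top prob_le_one
  rcases le_or_gt m u with hmu | hmu
  · -- main case
    have hP2 : (ν {x | u ≤ h x}).toReal ≤ Real.exp (-(2 * (u - m) ^ 2) / n) := by
      set l := 4 * (u - m) / n with hl
      have hl0 : 0 ≤ l := by
        apply div_nonneg _ hnpos.le; linarith
      have hmark := measure_ge_le_exp_mul_mgf (X := h) (μ := ν) u hl0 (hint l)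
      refine hmark.trans ?_
      rw [mgf]
      calc Real.exp (-l * u) * ∫ x, Real.exp (l * h x) ∂ν
          ≤ Real.exp (-l * u) * Real.exp (l * m + l ^ 2 * n / 8) := by
            exact mul_le_mul_of_nonneg_left (hmgf l) (Real.exp_pos _).le
        _ = Real.exp (-l * u + (l * m + l ^ 2 * n / 8)) := by rw [← Real.exp_add]
        _ ≤ Real.exp (-(2 * (u - m) ^ 2) / n) := by
            rw [Real.exp_le_exp, hl]
            field_simp
            ring_nf
            nlinarith [sq_nonneg ((u - m) * n)]
    calc (ν {x | h x ≤ 0}).toReal * (ν {x | u ≤ h x}).toReal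
        ≤ Real.exp (-(2 * m ^ 2) / n) * Real.exp (-(2 * (u - m) ^ 2) / n) := by
          exact mul_le_mul hP1 hP2 ENNReal.toReal_nonneg (Real.exp_pos _).le
      _ = Real.exp (-(2 * m ^ 2) / n + -(2 * (u - m) ^ 2) / n) := by rw [← Real.exp_add]
      _ ≤ Real.exp (-(u ^ 2) / n) := by
          rw [Real.exp_le_exp]
          rw [← add_div, div_le_div_iff₀ hnpos hnpos]
          nlinarith [sq_nonneg (2 * m - u), sq_nonneg n]
  · -- m > u
    calc (ν {x | h x ≤ 0}).toReal * (ν {x | u ≤ h x}).toReal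
        ≤ Real.exp (-(2 * m ^ 2) / n) * 1 :=
          mul_le_mul hP1 hP2bdd ENNReal.toReal_nonneg (Real.exp_pos _).le
      _ = Real.exp (-(2 * m ^ 2) / n) := mul_one _
      _ ≤ Real.exp (-(u ^ 2) / n) := by
          rw [Real.exp_le_exp, div_le_div_iff₀ hnpos hnpos]
          have h1 : u ^ 2 ≤ 2 * m ^ 2 := by nlinarith
          nlinarith [mul_le_mul_of_nonneg_right h1 hnpos.le]


/-- Talagrand/McDiarmid-type concentration for bounded iid coordinates: if `μ` is the law
of a variable bounded by `C₀`, with mean zero and variance one, and `A ⊆ ℝⁿ` is Borel,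
then `P(x ∈ A) · P(d₂(x,A) ≥ t√n) ≤ 4 exp(-t⁴n/(16C₀⁴))` under the product measure. -/
theorem stmt18 (C₀ : ℝ) (hC₀ : 0 < C₀) (μ : Measure ℝ) [IsProbabilityMeasure μ]
    (hbdd : ∀ᵐ x ∂μ, |x| ≤ C₀)
    (hmean : ∫ x, x ∂μ = 0) (hvar : ∫ x, x ^ 2 ∂μ = 1)
    (n : ℕ) (hn : 0 < n) (A : Set (Fin n → ℝ)) (hA : MeasurableSet A)
    (t : ℝ) (ht : 0 < t) :
    Measure.pi (fun _ : Fin n => μ) A *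
        Measure.pi (fun _ : Fin n => μ)
          {x : Fin n → ℝ | ∀ y ∈ A,
            t * Real.sqrt n ≤ Real.sqrt (∑ i : Fin n, (x i - y i) ^ 2)}
      ≤ ENNReal.ofReal (4 * Real.exp (-(t ^ 4 * n) / (16 * C₀ ^ 4))) := by
  set ν := Measure.pi (fun _ : Fin n => μ) with hν
  set B := {x : Fin n → ℝ | ∀ y ∈ A,
      t * Real.sqrt n ≤ Real.sqrt (∑ i : Fin n, (x i - y i) ^ 2)} with hBdef
  set Box : Set (Fin n → ℝ) := Set.pi Set.univ (fun _ => Set.Icc (-C₀) C₀) with hBoxdef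
  have hBoxMeas : MeasurableSet Box := MeasurableSet.univ_pi (fun _ => measurableSet_Icc)
  have hIcc : μ (Set.Icc (-C₀) C₀) = 1 := by
    rw [← prob_compl_eq_zero_iff measurableSet_Icc]
    have h0 : ∀ᵐ x ∂μ, x ∈ Set.Icc (-C₀) C₀ := hbdd.mono (fun x hx => abs_le.1 hx)
    rw [ae_iff] at h0
    exact h0
  have hBoxone : ν Box = 1 := by
    rw [hν, hBoxdef, Measure.pi_pi]
    simp [hIcc]
  have hBoxc : ν Boxᶜ = 0 := by
    rw [prob_compl_eq_zero_iff hBoxMeas]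
    exact hBoxone
  have hnR : (0:ℝ) < n := by exact_mod_cast hn
  set u : ℝ := t ^ 2 * n / (4 * C₀ ^ 2) with hu
  have hupos : 0 < u := by positivity
  have huSq : -(u ^ 2) / n = -(t ^ 4 * n) / (16 * C₀ ^ 4) := by
    rw [hu]
    field_simp
    ring
  -- key bound for nonempty compact subsets of A ∩ Box
  have hKey : ∀ K₀ : Set (Fin n → ℝ), K₀ ⊆ A ∩ Box → IsCompact K₀ →
      ν K₀ * ν B ≤ ENNReal.ofReal (Real.exp (-(t ^ 4 * n) / (16 * C₀ ^ 4))) := by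
    intro K₀ hK₀sub hK₀c
    rcases K₀.eq_empty_or_nonempty with rfl | hK₀ne
    · simp
    classical
    set ham : (Fin n → ℝ) → (Fin n → ℝ) → ℕ :=
      fun x y => (Finset.univ.filter (fun i => x i ≠ y i)).card with hham
    set hN : (Fin n → ℝ) → ℕ := fun x => sInf ((fun y => ham x y) '' K₀) with hhN
    have hSne : ∀ x, ((fun y => ham x y) '' K₀).Nonempty := fun x => hK₀ne.image _
    have hattain : ∀ x, ∃ y ∈ K₀, ham x y = hN x := by
      intro x
      rcases Nat.sInf_mem (hSne x) with ⟨y, hy, hxy⟩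
      exact ⟨y, hy, hxy⟩
    have hle : ∀ x y, y ∈ K₀ → hN x ≤ ham x y := fun x y hy => Nat.sInf_le ⟨y, hy, rfl⟩
    set h : (Fin n → ℝ) → ℝ := fun x => (hN x : ℝ) with hh
    -- level sets are measurable
    have hlevelMeas : ∀ k : ℕ, MeasurableSet {x | hN x ≤ k} := by
      intro k
      have hlevel : {x | hN x ≤ k} = ⋃ (s : Finset (Fin n)) (_ : s.card ≤ k),
          (fun (x : Fin n → ℝ) (i : {i : Fin n // i ∉ s}) => x i.1) ⁻¹'
            ((fun (x : Fin n → ℝ) (i : {i : Fin n // i ∉ s}) => x i.1) '' K₀) := by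
        ext x
        simp only [Set.mem_setOf_eq, Set.mem_iUnion, Set.mem_preimage, Set.mem_image]
        constructor
        · intro hk
          rcases hattain x with ⟨y, hyK, hyham⟩
          have hcard : (Finset.univ.filter (fun i => x i ≠ y i)).card ≤ k := by
            show ham x y ≤ k
            omega
          refine ⟨Finset.univ.filter (fun i => x i ≠ y i), hcard, y, hyK, ?_⟩
          funext i
          have hi := i.2
          simp only [Finset.mem_filter, Finset.mem_univ, true_and, not_not] at hi
          exact hi.symm
        · rintro ⟨s, hs, y, hyK, hyx⟩
          have hsub : Finset.univ.filter (fun i => x i ≠ y i) ⊆ s := by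
            intro i hi
            simp only [Finset.mem_filter, Finset.mem_univ, true_and] at hi
            by_contra his
            exact hi (congrFun hyx ⟨i, his⟩).symm
          have h2 : ham x y ≤ s.card := Finset.card_le_card hsub
          have h3 := hle x y hyK
          omega
      rw [hlevel]
      refine MeasurableSet.iUnion fun s => MeasurableSet.iUnion fun _ => ?_
      have hcont : Continuous fun (x : Fin n → ℝ) (i : {i : Fin n // i ∉ s}) => x i.1 :=
        continuous_pi fun i => continuous_apply i.1
      exact (((hK₀c.image hcont).isClosed).preimage hcont).measurableSet
    have hNmeas : Measurable hN := by
      refine measurable_to_countable' fun k => ?_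
      match k with
      | 0 =>
        have : hN ⁻¹' {0} = {x | hN x ≤ 0} := by
          ext x; simp [Nat.le_zero]
        rw [this]; exact hlevelMeas 0
      | (k+1) =>
        have : hN ⁻¹' {k+1} = {x | hN x ≤ k+1} \ {x | hN x ≤ k} := by
          ext x
          simp only [Set.mem_preimage, Set.mem_singleton_iff, Set.mem_diff, Set.mem_setOf_eq]
          omega
        rw [this]; exact (hlevelMeas (k+1)).diff (hlevelMeas k)
    have hmeas : Measurable h := measurable_from_top.comp hNmeas
    have hbK : ∀ x, |h x| ≤ (n:ℝ) := by
      intro x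
      rw [hh, abs_of_nonneg (Nat.cast_nonneg _), Nat.cast_le]
      calc hN x ≤ ham x hK₀ne.some := hle x _ hK₀ne.some_mem
        _ ≤ Finset.univ.card := Finset.card_filter_le _ _
        _ = n := Finset.card_univ.trans (Fintype.card_fin n)
    have hposh : ∀ x, 0 ≤ h x := fun x => Nat.cast_nonneg _
    -- oscillation
    have hoscN : ∀ (i : Fin n) (x y : Fin n → ℝ), (∀ j, j ≠ i → x j = y j) →
        hN x ≤ hN y + 1 := by
      intro i x y hxy
      rcases hattain y with ⟨z, hzK, hzham⟩
      have hsub : Finset.univ.filter (fun j => x j ≠ z j) ⊆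
          insert i (Finset.univ.filter (fun j => y j ≠ z j)) := by
        intro j hj
        simp only [Finset.mem_filter, Finset.mem_univ, true_and] at hj
        rcases eq_or_ne j i with rfl | hji
        · exact Finset.mem_insert_self _ _
        · refine Finset.mem_insert_of_mem ?_
          simp only [Finset.mem_filter, Finset.mem_univ, true_and]
          rw [← hxy j hji]
          exact hj
      calc hN x ≤ ham x z := hle x z hzK
        _ ≤ (insert i (Finset.univ.filter (fun j => y j ≠ z j))).card :=
            Finset.card_le_card hsub
        _ ≤ ham y z + 1 := Finset.card_insert_le _ _
        _ = hN y + 1 := by rw [hzham]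
    have hosc : ∀ (i : Fin n) (x y : Fin n → ℝ), (∀ j, j ≠ i → x j = y j) →
        |h x - h y| ≤ 1 := by
      intro i x y hxy
      have h1 := hoscN i x y hxy
      have h2 := hoscN i y x (fun j hj => (hxy j hj).symm)
      have hc1 : (hN x : ℝ) ≤ (hN y : ℝ) + 1 := by exact_mod_cast h1
      have hc2 : (hN y : ℝ) ≤ (hN x : ℝ) + 1 := by exact_mod_cast h2
      rw [abs_le]
      constructor <;> simp only [hh] <;> linarith
    -- mgf bound
    have hintb : Integrable h ν := bdd_int _ hmeas hbK
    have hmgf : ∀ l : ℝ, ∫ x, Real.exp (l * h x) ∂ν ≤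
        Real.exp (l * (∫ x, h x ∂ν) + l ^ 2 * n / 8) := by
      intro l
      have hoscl : ∀ (i : Fin n) (x y : Fin n → ℝ), (∀ j, j ≠ i → x j = y j) →
          l * h x ≤ l * h y + |l| := by
        intro i x y hxy
        have := hosc i x y hxy
        calc l * h x = l * h y + l * (h x - h y) := by ring
          _ ≤ l * h y + |l * (h x - h y)| := by linarith [le_abs_self (l * (h x - h y))]
          _ ≤ l * h y + |l| := by
              rw [abs_mul]
              nlinarith [abs_nonneg l, abs_nonneg (h x - h y)]
      have hlb : ∀ x, |l * h x| ≤ |l| * n := by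
        intro x
        rw [abs_mul]
        exact mul_le_mul_of_nonneg_left (hbK x) (abs_nonneg l)
      have := mcdiarmid μ n (fun x => l * h x) |l| (|l| * n) (abs_nonneg l)
        (hmeas.const_mul l) hlb hoscl
      refine this.trans (le_of_eq ?_)
      rw [integral_const_mul]
      congr 1
      rw [sq_abs]
      ring
    have hchern := chernoff_product ν h hmeas n hn n hbK hposh hmgf u hupos
    -- K₀ ⊆ {h ≤ 0}
    have hK0sub : K₀ ⊆ {x | h x ≤ 0} := by
      intro x hx
      have : hN x ≤ ham x x := hle x x hx
      have hxx : ham x x = 0 := by simp [hham]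
      simp only [Set.mem_setOf_eq, hh]
      rw [hxx] at this
      exact_mod_cast Nat.le_zero.1 this |>.le
    -- B ∩ Box ⊆ {u ≤ h}
    have hBsub : B ⊆ {x | u ≤ h x} ∪ Boxᶜ := by
      intro x hxB
      by_cases hxBox : x ∈ Box
      · left
        rcases hattain x with ⟨y, hyK, hyham⟩
        have hyA : y ∈ A := (hK₀sub hyK).1
        have hyBox : y ∈ Box := (hK₀sub hyK).2
        have hd := hxB y hyA
        have hsumnn : (0:ℝ) ≤ ∑ i : Fin n, (x i - y i) ^ 2 :=
          Finset.sum_nonneg fun i _ => sq_nonneg _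
        have ht2 : t ^ 2 * n ≤ ∑ i : Fin n, (x i - y i) ^ 2 := by
          have hsq := pow_le_pow_left₀ (by positivity) hd 2
          rw [mul_pow, Real.sq_sqrt (Nat.cast_nonneg n), Real.sq_sqrt hsumnn] at hsq
          exact hsq
        have hsum : ∑ i : Fin n, (x i - y i) ^ 2 ≤ 4 * C₀ ^ 2 * ham x y := by
          have hstep : ∀ i : Fin n, (x i - y i) ^ 2 ≤
              if x i ≠ y i then (2 * C₀) ^ 2 else 0 := by
            intro i
            by_cases hxy : x i = y i
            · simp [hxy]
            · rw [if_pos hxy]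
              have hxi := hxBox i (Set.mem_univ i)
              have hyi := hyBox i (Set.mem_univ i)
              simp only [Set.mem_Icc] at hxi hyi
              have : |x i - y i| ≤ 2 * C₀ := by
                rw [abs_le]; constructor <;> linarith [hxi.1, hxi.2, hyi.1, hyi.2]
              nlinarith [abs_nonneg (x i - y i), sq_abs (x i - y i)]
          calc ∑ i : Fin n, (x i - y i) ^ 2
              ≤ ∑ i : Fin n, (if x i ≠ y i then (2 * C₀) ^ 2 else 0) :=
                Finset.sum_le_sum fun i _ => hstep i
            _ = ∑ i ∈ Finset.univ.filter (fun i => x i ≠ y i), (2 * C₀) ^ 2 :=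
                (Finset.sum_filter _ _).symm
            _ = (ham x y : ℝ) * (2 * C₀) ^ 2 := by
                rw [Finset.sum_const, nsmul_eq_mul, hham]
            _ = 4 * C₀ ^ 2 * ham x y := by ring
        simp only [Set.mem_setOf_eq]
        show u ≤ h x
        have hxh : h x = (ham x y : ℝ) := by
          show (hN x : ℝ) = (ham x y : ℝ)
          exact_mod_cast hyham.symm
        rw [hxh, hu, div_le_iff₀ (by positivity)]
        nlinarith
      · right; exact hxBox
    -- conclude
    have hB1 : ν B ≤ ν {x | u ≤ h x} := by
      calc ν B ≤ ν ({x | u ≤ h x} ∪ Boxᶜ) := measure_mono hBsub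
        _ ≤ ν {x | u ≤ h x} + ν Boxᶜ := measure_union_le _ _
        _ = ν {x | u ≤ h x} := by rw [hBoxc, add_zero]
    have hstep1 : ν K₀ * ν B ≤ ν {x | h x ≤ 0} * ν {x | u ≤ h x} :=
      mul_le_mul' (measure_mono hK0sub) hB1
    have hstep2 : ν {x | h x ≤ 0} * ν {x | u ≤ h x}
        = ENNReal.ofReal ((ν {x | h x ≤ 0}).toReal * (ν {x | u ≤ h x}).toReal) := by
      rw [ENNReal.ofReal_mul ENNReal.toReal_nonneg,
        ENNReal.ofReal_toReal (measure_ne_top _ _),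
        ENNReal.ofReal_toReal (measure_ne_top _ _)]
    refine hstep1.trans ?_
    rw [hstep2, ← huSq]
    exact ENNReal.ofReal_le_ofReal hchern
  -- inner regularity
  have hABox : ν A ≤ ν (A ∩ Box) := by
    calc ν A ≤ ν ((A ∩ Box) ∪ Boxᶜ) := measure_mono (fun x hx => by
          by_cases hxB : x ∈ Box
          · exact Or.inl ⟨hx, hxB⟩
          · exact Or.inr hxB)
      _ ≤ ν (A ∩ Box) + ν Boxᶜ := measure_union_le _ _
      _ = ν (A ∩ Box) := by rw [hBoxc, add_zero]
  have hreg : ν (A ∩ Box) = ⨆ (K : Set (Fin n → ℝ)) (_ : K ⊆ A ∩ Box) (_ : IsCompact K), ν K :=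
    MeasurableSet.measure_eq_iSup_isCompact (hA.inter hBoxMeas) ν
  calc ν A * ν B ≤ ν (A ∩ Box) * ν B := mul_le_mul_left hABox _
    _ = (⨆ (K : Set (Fin n → ℝ)) (_ : K ⊆ A ∩ Box) (_ : IsCompact K), ν K) * ν B := by
        rw [← hreg]
    _ ≤ ENNReal.ofReal (Real.exp (-(t ^ 4 * n) / (16 * C₀ ^ 4))) := by
        rw [ENNReal.iSup_mul]
        refine iSup_le fun K => ?_
        rw [ENNReal.iSup_mul]
        refine iSup_le fun hKsub => ?_
        rw [ENNReal.iSup_mul]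
        refine iSup_le fun hKc => ?_
        exact hKey K hKsub hKc
    _ ≤ ENNReal.ofReal (4 * Real.exp (-(t ^ 4 * n) / (16 * C₀ ^ 4))) := by
        refine ENNReal.ofReal_le_ofReal ?_
        nlinarith [Real.exp_pos (-(t ^ 4 * n) / (16 * C₀ ^ 4))]
end

section
/- Let f be holomorphic on a neighborhood of the closed disk B̄(t₀, 4δ) ⊆ ℂ, real-valued on ℝ, with |f(z)| ≤ M_R on B̄(t₀, 4δ) and max_{t ∈ I} |f(t)| ≥ m₀ > 0 for a real interval I ⊆ B(t₀, δ) ∩ ℝ. Then the number of zeros of f in B̄(t₀, δ) is at most (log M_R - log m₀)/log(17/8). -/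
open Metric

section ZeroCountAux
open Complex


lemma blaschke_key (δ : ℝ) (hδ : 0 < δ) (a w : ℂ) (ha : ‖a‖ ≤ δ)
    (hw : ‖w‖ ≤ δ) :
    17 * δ * ‖w - a‖ ≤ 2 * ‖16 * (δ:ℂ)^2 - (starRingEnd ℂ) a * w‖ := by
  have habs : ∀ z : ℂ, ‖z‖ ^ 2 = z.re ^ 2 + z.im ^ 2 := by
    intro z; rw [Complex.sq_norm, Complex.normSq_apply]; ring
  have hA : a.re ^ 2 + a.im ^ 2 ≤ δ ^ 2 := by
    rw [← habs]; exact pow_le_pow_left₀ (norm_nonneg a) ha 2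
  have hW : w.re ^ 2 + w.im ^ 2 ≤ δ ^ 2 := by
    rw [← habs]; exact pow_le_pow_left₀ (norm_nonneg w) hw 2
  have h1 : (δ^2 - (a.re^2 + a.im^2)) * (δ^2 - (w.re^2 + w.im^2)) ≥ 0 :=
    mul_nonneg (by linarith) (by linarith)
  have hu2 : (a.re*w.re + a.im*w.im)^2 ≤ (a.re^2 + a.im^2) * (w.re^2 + w.im^2) := by
    nlinarith [sq_nonneg (a.re*w.im - a.im*w.re)]
  have hxy : (a.re^2 + a.im^2) * (w.re^2 + w.im^2) ≤ δ^2 * δ^2 := by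
    nlinarith [sq_nonneg a.re, sq_nonneg a.im, sq_nonneg w.re, sq_nonneg w.im]
  have hu : -(δ^2) ≤ a.re*w.re + a.im*w.im := by
    nlinarith [hu2.trans hxy, sq_nonneg (a.re*w.re + a.im*w.im + δ^2)]
  have hsq : (17 * δ * ‖w - a‖)^2
      ≤ (2 * ‖16 * (δ:ℂ)^2 - (starRingEnd ℂ) a * w‖)^2 := by
    have hc : (16 * (δ:ℂ)^2) = ((16 * δ^2 : ℝ) : ℂ) := by push_cast; ring
    rw [hc, mul_pow, mul_pow, mul_pow, habs, habs]
    simp only [Complex.sub_re, Complex.sub_im, Complex.mul_re, Complex.mul_im,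
      Complex.conj_re, Complex.conj_im, Complex.ofReal_re, Complex.ofReal_im]
    ring_nf
    nlinarith [h1, hxy, mul_nonneg (sq_nonneg δ) (by linarith : 0 ≤ δ^2 + (a.re*w.re + a.im*w.im))]
  have h17 : 0 ≤ 17 * δ * ‖w - a‖ := by positivity
  have h2' : 0 ≤ 2 * ‖16 * (δ:ℂ)^2 - (starRingEnd ℂ) a * w‖ := by positivity
  nlinarith [hsq, h17, h2']

lemma zeros_factor_bound (t₀ δ : ℝ) (hδ : 0 < δ) (M : ℝ) (Z : Finset ℂ) :
    ∀ (f : ℂ → ℂ) (U : Set ℂ), IsOpen U → closedBall (t₀ : ℂ) (4 * δ) ⊆ U →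
    DifferentiableOn ℂ f U → (∀ z ∈ closedBall (t₀ : ℂ) (4 * δ), ‖f z‖ ≤ M) →
    (∀ a ∈ Z, a ∈ closedBall (t₀ : ℂ) δ ∧ f a = 0) →
    ∀ w ∈ ball (t₀ : ℂ) δ, ‖f w‖ * (17/8) ^ Z.card ≤ M := by
  induction Z using Finset.induction_on with
  | empty =>
    intro f U hUo hUsub hfd hM hZ w hw
    simpa using hM w (closedBall_subset_closedBall (by linarith) (ball_subset_closedBall hw))
  | @insert a Z haZ IH =>
    intro f U hUo hUsub hfd hM hZ w hw
    have hsub : closedBall (t₀ : ℂ) δ ⊆ closedBall (t₀ : ℂ) (4 * δ) :=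
      closedBall_subset_closedBall (by linarith)
    have haD : a ∈ closedBall (t₀ : ℂ) δ := (hZ a (Finset.mem_insert_self a Z)).1
    have hfa : f a = 0 := (hZ a (Finset.mem_insert_self a Z)).2
    have haU : a ∈ U := hUsub (hsub haD)
    set g : ℂ → ℂ := dslope f a with hg
    have hgd : DifferentiableOn ℂ g U :=
      (Complex.differentiableOn_dslope (hUo.mem_nhds haU)).2 hfd
    have hfz : ∀ z : ℂ, f z = (z - a) * g z := by
      intro z
      have := sub_smul_dslope f a z
      rw [smul_eq_mul, hfa, sub_zero] at this
      rw [← this, hg]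
    set h : ℂ → ℂ := fun z =>
      g z * ((16 * (δ:ℂ)^2 - (starRingEnd ℂ) (a - (t₀:ℂ)) * (z - (t₀:ℂ))) / (4 * (δ:ℂ))) with hh
    have hhd : DifferentiableOn ℂ h U := by
      apply hgd.mul
      apply Differentiable.differentiableOn
      apply Differentiable.div_const
      exact (differentiable_const _).sub ((differentiable_const _).mul
        ((differentiable_id).sub (differentiable_const _)))
    -- boundary identity: on the sphere, |h z| = |f z|
    have hbd : ∀ z ∈ sphere (t₀ : ℂ) (4 * δ), ‖h z‖ = ‖f z‖ := by
      intro z hz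
      have hzabs : ‖z - (t₀:ℂ)‖ = 4 * δ := by
        rw [← Complex.dist_eq]; exact mem_sphere.mp hz
      have hzt : (z - (t₀:ℂ)) * (starRingEnd ℂ) (z - (t₀:ℂ)) = (16 * (δ:ℂ)^2) := by
        rw [Complex.mul_conj]
        rw [Complex.normSq_eq_norm_sq, hzabs]
        push_cast; ring
      have hident : 16 * (δ:ℂ)^2 - (starRingEnd ℂ) (a - (t₀:ℂ)) * (z - (t₀:ℂ))
          = (z - (t₀:ℂ)) * (starRingEnd ℂ) (z - a) := by
        have e : (starRingEnd ℂ) (z - a)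
            = (starRingEnd ℂ) (z - (t₀:ℂ)) - (starRingEnd ℂ) (a - (t₀:ℂ)) := by
          rw [← map_sub]; ring_nf
        linear_combination -hzt - (z - (t₀:ℂ)) * e
      rw [hh]
      simp only [hident, norm_mul, norm_div, Complex.norm_conj, Complex.norm_real,
        Real.norm_eq_abs, Complex.norm_ofNat]
      rw [hzabs, abs_of_pos hδ, hfz z, norm_mul]
      field_simp
    -- max modulus: |h| ≤ M on the closed ball
    have hMh : ∀ z ∈ closedBall (t₀ : ℂ) (4 * δ), ‖h z‖ ≤ M := by
      intro z hz
      have hcl : closure (ball (t₀ : ℂ) (4 * δ)) = closedBall (t₀ : ℂ) (4 * δ) :=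
        closure_ball _ (by positivity : (0:ℝ) < 4 * δ).ne'
      have hdc : DiffContOnCl ℂ h (ball (t₀ : ℂ) (4 * δ)) := by
        apply DifferentiableOn.diffContOnCl
        rw [hcl]; exact hhd.mono hUsub
      have := Complex.norm_le_of_forall_mem_frontier_norm_le
        (isBounded_ball) hdc (C := M) ?_ (z := z) (hcl ▸ hz)
      · simpa using this
      · intro x hx
        rw [frontier_ball _ (by positivity : (0:ℝ) < 4 * δ).ne'] at hx
        rw [hbd x hx]
        exact hM x (sphere_subset_closedBall hx)
    -- zeros of h
    have hZh : ∀ b ∈ Z, b ∈ closedBall (t₀ : ℂ) δ ∧ h b = 0 := by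
      intro b hb
      refine ⟨(hZ b (Finset.mem_insert_of_mem hb)).1, ?_⟩
      have hfb : f b = 0 := (hZ b (Finset.mem_insert_of_mem hb)).2
      have hba : b ≠ a := fun e => haZ (e ▸ hb)
      have : g b = 0 := by
        rw [hg, dslope_of_ne f hba, slope_def_field, hfb, hfa]
        simp
      simp [hh, this]
    have hIH := IH h U hUo hUsub hhd hMh hZh w hw
    -- lower bound at w : (17/8) * |f w| ≤ |h w|
    have hwδ : ‖w - (t₀:ℂ)‖ ≤ δ := by
      have := mem_ball.1 hw
      rw [Complex.dist_eq] at this; linarith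
    have haδ : ‖a - (t₀:ℂ)‖ ≤ δ := by
      have := mem_closedBall.1 haD
      rwa [Complex.dist_eq] at this
    have hbl := blaschke_key δ hδ (a - (t₀:ℂ)) (w - (t₀:ℂ)) haδ hwδ
    have hwa : (w - (t₀:ℂ)) - (a - (t₀:ℂ)) = w - a := by ring
    rw [hwa] at hbl
    have hhw : ‖h w‖ = ‖g w‖ *
        ‖16 * (δ:ℂ)^2 - (starRingEnd ℂ) (a - (t₀:ℂ)) * (w - (t₀:ℂ))‖ / (4 * δ) := by
      rw [hh]
      simp only [norm_mul, norm_div, Complex.norm_real, Real.norm_eq_abs, Complex.norm_ofNat]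
      rw [abs_of_pos hδ]
      ring
    have hfw : ‖f w‖ = ‖w - a‖ * ‖g w‖ := by
      rw [hfz w, norm_mul]
    have hstep : 17/8 * ‖f w‖ ≤ ‖h w‖ := by
      rw [hfw, hhw, le_div_iff₀ (by linarith : (0:ℝ) < 4 * δ)]
      nlinarith [mul_le_mul_of_nonneg_right hbl (norm_nonneg (g w))]
    rw [Finset.card_insert_of_notMem haZ, pow_succ]
    calc ‖f w‖ * ((17/8) ^ Z.card * (17/8))
        = (17/8 * ‖f w‖) * (17/8) ^ Z.card := by ring
      _ ≤ ‖h w‖ * (17/8) ^ Z.card :=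
          mul_le_mul_of_nonneg_right hstep (by positivity)
      _ ≤ M := hIH

end ZeroCountAux

/-- Quantitative zero-count bound via Jensen's inequality with radii `δ` and `4δ`:
a holomorphic function bounded by `M_R` on `closedBall t₀ (4δ)`, real on `ℝ`, whose
maximum on a real interval `I ⊆ B(t₀, δ)` is at least `m₀ > 0`, has at most
`(log M_R - log m₀)/log(17/8)` zeros in `closedBall t₀ δ`. -/
theorem stmt19 (f : ℂ → ℂ) (U : Set ℂ) (hU : IsOpen U) (t₀ : ℝ) (δ : ℝ) (hδ : 0 < δ)
    (hball : closedBall (t₀ : ℂ) (4 * δ) ⊆ U) (hf : DifferentiableOn ℂ f U)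
    (hreal : ∀ t : ℝ, (f (t : ℂ)).im = 0)
    (M_R m₀ : ℝ) (hm₀ : 0 < m₀)
    (hM : ∀ z ∈ closedBall (t₀ : ℂ) (4 * δ), ‖f z‖ ≤ M_R)
    (u v : ℝ) (huv : u ≤ v)
    (hI : ∀ t ∈ Set.Icc u v, (t : ℂ) ∈ ball (t₀ : ℂ) δ)
    (hlow : ∃ t ∈ Set.Icc u v, m₀ ≤ ‖f (t : ℂ)‖)
    (Z : Finset ℂ) (hZ : ∀ z ∈ Z, z ∈ closedBall (t₀ : ℂ) δ ∧ f z = 0) :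
    (Z.card : ℝ) ≤ (Real.log M_R - Real.log m₀) / Real.log (17 / 8) := by
  obtain ⟨t₁, ht₁, hm⟩ := hlow
  have hw : (t₁ : ℂ) ∈ ball (t₀ : ℂ) δ := hI t₁ ht₁
  have hmain := zeros_factor_bound t₀ δ hδ M_R Z f U hU hball hf hM hZ (t₁ : ℂ) hw
  have hkey : m₀ * (17/8) ^ Z.card ≤ M_R :=
    le_trans (mul_le_mul_of_nonneg_right hm (by positivity)) hmain
  have hpos : (0:ℝ) < m₀ * (17/8) ^ Z.card := by positivity
  have hlog := Real.log_le_log hpos hkey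
  rw [Real.log_mul (ne_of_gt hm₀) (by positivity), Real.log_pow] at hlog
  have hl : 0 < Real.log (17/8) := Real.log_pos (by norm_num)
  rw [le_div_iff₀ hl]
  push_cast at hlog ⊢
  linarith
end
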